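/- arXiv:2511.10895 — 3 statements merged into one kernel-verified Lean document; each statement's English description precedes it below -/
import Mathlib

section
/- Let t ≥ 3 be an integer. Every t-villa is (2P_3, C_4, C_6, C_7, T_0)-free and contains an induced t-pentagon. Moreover, every t-villa is anticonnected and contains no simplicial and no universal vertices. -/
namespace Paper

open SimpleGraph

variable {V : Type} {W : Type}

/-- `G` contains no induced copy of `H` (there is no graph embedding of `H` into `G`). -/
def IndFree (G : SimpleGraph V) (H : SimpleGraph W) : Prop :=
  IsEmpty (H ↪g G)

/-- `2P₃`: the disjoint union of two paths on three vertices. -/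
def twoP3 : SimpleGraph (Fin 3 ⊕ Fin 3) :=
  SimpleGraph.fromRel (fun u v =>
    match u, v with
    | Sum.inl a, Sum.inl b => (pathGraph 3).Adj a b
    | Sum.inr a, Sum.inr b => (pathGraph 3).Adj a b
    | _, _ => False)

/-- `4K₁`: the edgeless graph on four vertices. -/
def fourK1 : SimpleGraph (Fin 4) := ⊥

/-- The cycle on `n` vertices (for `n ≥ 3`). -/
def cycleG (n : ℕ) : SimpleGraph (ZMod n) :=
  SimpleGraph.fromRel (fun u v => v = u + 1)

/-- The graph `T₀`: vertices `0,…,8` stand for `a₀,a₁,b₀,b₁,b₂,b₃,c₁,c₂,c₃`. -/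
def T0 : SimpleGraph (Fin 9) :=
  SimpleGraph.fromRel (fun u v =>
    (u, v) ∈ ([(0,1),(0,2),(0,4),(0,5),(1,3),(1,4),(1,5),(2,6),(3,6),
               (4,7),(5,8),(6,7),(6,8),(7,8)] : List (Fin 9 × Fin 9)))

/-- The `t`-pentagon: `Sum.inl ()` is the vertex `a`, `Sum.inr (Sum.inl i)` is `bᵢ`,
and `Sum.inr (Sum.inr i)` is `cᵢ`. -/
def pentagon (t : ℕ) : SimpleGraph (Unit ⊕ Fin t ⊕ Fin t) :=
  SimpleGraph.fromRel (fun u v =>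
    match u, v with
    | Sum.inl _, Sum.inr (Sum.inl _) => True
    | Sum.inr (Sum.inl i), Sum.inr (Sum.inr j) => i = j
    | Sum.inr (Sum.inr _), Sum.inr (Sum.inr _) => True
    | _, _ => False)

/-- `X` is complete to `Y` in `G`. -/
def CompleteTo (G : SimpleGraph V) (X Y : Set V) : Prop :=
  ∀ x ∈ X, ∀ y ∈ Y, G.Adj x y

/-- `X` is anticomplete to `Y` in `G`. -/
def AnticompleteTo (G : SimpleGraph V) (X Y : Set V) : Prop :=
  ∀ x ∈ X, ∀ y ∈ Y, ¬ G.Adj x y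

/-- A simplicial vertex: its neighborhood is a clique. -/
def IsSimplicial (G : SimpleGraph V) (v : V) : Prop :=
  G.IsClique (G.neighborSet v)

/-- A universal vertex: adjacent to all other vertices. -/
def IsUniversal (G : SimpleGraph V) (v : V) : Prop :=
  ∀ w, w ≠ v → G.Adj v w




/-- A 5-basket partition `(A; B 0, B 1, B 2; C 0, C 1, C 2; F)` of `Q`. -/
def IsFiveBasketPartition (Q : SimpleGraph W) (A : Set W) (B C : Fin 3 → Set W)
    (F : Set W) : Prop :=
  (∀ i, Disjoint A (B i)) ∧ (∀ i, Disjoint A (C i)) ∧ Disjoint A F ∧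
  (∀ i j, i ≠ j → Disjoint (B i) (B j)) ∧
  (∀ i j, i ≠ j → Disjoint (C i) (C j)) ∧
  (∀ i j, Disjoint (B i) (C j)) ∧
  (∀ i, Disjoint (B i) F) ∧ (∀ i, Disjoint (C i) F) ∧
  (A ∪ (⋃ i, B i) ∪ (⋃ i, C i) ∪ F = Set.univ) ∧
  Q.IsClique A ∧ (∀ i, Q.IsClique (B i)) ∧ (∀ i, Q.IsClique (C i)) ∧ Q.IsClique F ∧
  A.Nonempty ∧ (∀ i, (B i).Nonempty) ∧ (∀ i, (C i).Nonempty) ∧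
  (∀ i j, i ≠ j → AnticompleteTo Q (B i) (B j)) ∧
  (∀ i j, i ≠ j → CompleteTo Q (C i) (C j)) ∧
  (∀ i, AnticompleteTo Q A (C i)) ∧
  (∀ i, CompleteTo Q (B i) (C i)) ∧
  (∀ i j, i ≠ j → AnticompleteTo Q (B i) (C j)) ∧
  (∃ istar : Fin 3,
    (∀ i, i ≠ istar → CompleteTo Q A (B i)) ∧
    (∀ a ∈ A, ∀ a' ∈ A,
      Q.neighborSet a ∩ B istar ⊆ Q.neighborSet a' ∩ B istar ∨
      Q.neighborSet a' ∩ B istar ⊆ Q.neighborSet a ∩ B istar) ∧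
    (∃ a ∈ A, B istar ⊆ Q.neighborSet a)) ∧
  (∃ jstar : Fin 3,
    CompleteTo Q F (B jstar ∪ C jstar ∪ F)ᶜ ∧
    AnticompleteTo Q F (B jstar ∪ C jstar))

/-- A 5-basket. -/
def IsFiveBasket (Q : SimpleGraph W) : Prop :=
  ∃ (A : Set W) (B C : Fin 3 → Set W) (F : Set W), IsFiveBasketPartition Q A B C F

/-- All conditions of a `t`-villa partition except that the parts exhaust the vertex set. -/
def VillaCore {t : ℕ} (Q : SimpleGraph W) (A : Set W) (B C : Fin t → Set W) : Prop :=
  (∀ i, Disjoint A (B i)) ∧ (∀ i, Disjoint A (C i)) ∧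
  (∀ i j, i ≠ j → Disjoint (B i) (B j)) ∧
  (∀ i j, i ≠ j → Disjoint (C i) (C j)) ∧
  (∀ i j, Disjoint (B i) (C j)) ∧
  Q.IsClique A ∧ (∀ i, Q.IsClique (B i)) ∧ (∀ i, Q.IsClique (C i)) ∧
  A.Nonempty ∧ (∀ i, (B i).Nonempty) ∧ (∀ i, (C i).Nonempty) ∧
  (∀ i, CompleteTo Q A (B i)) ∧ (∀ i, AnticompleteTo Q A (C i)) ∧
  (∀ i j, i ≠ j → AnticompleteTo Q (B i) (B j)) ∧
  (∀ i j, i ≠ j → CompleteTo Q (C i) (C j)) ∧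
  (∀ i j, i ≠ j → AnticompleteTo Q (B i) (C j)) ∧
  (∀ i, ∀ b ∈ B i, ∀ b' ∈ B i,
     Q.neighborSet b ∩ C i ⊆ Q.neighborSet b' ∩ C i ∨
     Q.neighborSet b' ∩ C i ⊆ Q.neighborSet b ∩ C i) ∧
  (∀ i, ∀ b ∈ B i, (Q.neighborSet b ∩ C i).Nonempty) ∧
  (∀ i, ∃ b ∈ B i, C i ⊆ Q.neighborSet b)

/-- A `t`-villa partition `(A; B 0,…,B (t-1); C 0,…,C (t-1))` of `Q`. -/
def IsVillaPartition {t : ℕ} (Q : SimpleGraph W) (A : Set W) (B C : Fin t → Set W) : Prop :=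
  VillaCore Q A B C ∧ A ∪ (⋃ i, B i) ∪ (⋃ i, C i) = Set.univ

/-- A `t`-villa. -/
def IsTVilla (t : ℕ) (Q : SimpleGraph W) : Prop :=
  ∃ (A : Set W) (B C : Fin t → Set W), IsVillaPartition Q A B C

/-- A villa: a `t`-villa for some `t ≥ 3`. -/
def IsVilla (Q : SimpleGraph W) : Prop :=
  ∃ t, 3 ≤ t ∧ IsTVilla t Q

/-- A `t`-mansion partition `(A; B; C; F; X; Y)` of `Q`. -/
def IsMansionPartition {t : ℕ} (Q : SimpleGraph W) (A : Set W) (B C : Fin t → Set W)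
    (F X Y : Set W) : Prop :=
  VillaCore Q A B C ∧
  Disjoint A F ∧ Disjoint A X ∧ Disjoint A Y ∧
  (∀ i, Disjoint (B i) F) ∧ (∀ i, Disjoint (B i) X) ∧ (∀ i, Disjoint (B i) Y) ∧
  (∀ i, Disjoint (C i) F) ∧ (∀ i, Disjoint (C i) X) ∧ (∀ i, Disjoint (C i) Y) ∧
  Disjoint F X ∧ Disjoint F Y ∧ Disjoint X Y ∧
  (A ∪ (⋃ i, B i) ∪ (⋃ i, C i) ∪ F ∪ X ∪ Y = Set.univ) ∧
  Q.IsClique F ∧ Q.IsClique X ∧ Q.IsClique Y ∧ F.Nonempty ∧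
  (∃ jstar : Fin t,
    CompleteTo Q F A ∧
    (∀ i, i ≠ jstar → CompleteTo Q F (B i)) ∧
    (∀ i, i ≠ jstar → CompleteTo Q F (C i)) ∧
    AnticompleteTo Q F (B jstar) ∧ AnticompleteTo Q F (C jstar) ∧
    CompleteTo Q (B jstar) (C jstar) ∧
    CompleteTo Q X A ∧ CompleteTo Q X (B jstar) ∧
    (∀ i, i ≠ jstar → AnticompleteTo Q X (B i)) ∧
    (∀ i, AnticompleteTo Q X (C i))) ∧
  CompleteTo Q F X ∧ CompleteTo Q F Y ∧
  AnticompleteTo Q X Y ∧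
  (∀ i, CompleteTo Q Y (C i)) ∧
  AnticompleteTo Q Y A ∧ (∀ i, AnticompleteTo Q Y (B i))

/-- A `t`-mansion. -/
def IsTMansion (t : ℕ) (Q : SimpleGraph W) : Prop :=
  ∃ (A : Set W) (B C : Fin t → Set W) (F X Y : Set W),
    IsMansionPartition Q A B C F X Y

/-- A mansion: a `t`-mansion for some `t ≥ 3`. -/
def IsMansion (Q : SimpleGraph W) : Prop :=
  ∃ t, 3 ≤ t ∧ IsTMansion t Q

/-- A `t`-frame partition of `Q`. -/
def IsFramePartition {t : ℕ} (Q : SimpleGraph W) (A : Set W) (B C : Fin t → Set W) : Prop :=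
  (∀ i, Disjoint A (B i)) ∧ (∀ i, Disjoint A (C i)) ∧
  (∀ i j, i ≠ j → Disjoint (B i) (B j)) ∧
  (∀ i j, i ≠ j → Disjoint (C i) (C j)) ∧
  (∀ i j, Disjoint (B i) (C j)) ∧
  (A ∪ (⋃ i, B i) ∪ (⋃ i, C i) = Set.univ) ∧
  A.Nonempty ∧ (∀ i, (B i).Nonempty) ∧ (∀ i, (C i).Nonempty) ∧
  (∀ a ∈ A, ∃ i j : Fin t, i ≠ j ∧ (∃ b ∈ B i, Q.Adj a b) ∧ (∃ b ∈ B j, Q.Adj a b)) ∧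
  (∀ i, AnticompleteTo Q A (C i)) ∧
  (∀ i j, i ≠ j → AnticompleteTo Q (B i) (B j)) ∧
  (∀ i j, i ≠ j → CompleteTo Q (C i) (C j)) ∧
  (∀ i j, i ≠ j → AnticompleteTo Q (B i) (C j)) ∧
  (∀ i, ∀ b ∈ B i, ∃ a ∈ A, Q.Adj b a) ∧
  (∀ i, ∀ b ∈ B i, ∃ c ∈ C i, Q.Adj b c) ∧
  (∀ i, ∀ c ∈ C i, ∃ b ∈ B i, Q.Adj c b)

/-- A `k`-ring partition of `Q` (indices modulo `k`). -/
def IsRingPartition {k : ℕ} (Q : SimpleGraph W) (X : ZMod k → Set W) : Prop :=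
  (∀ i j, i ≠ j → Disjoint (X i) (X j)) ∧
  (⋃ i, X i) = Set.univ ∧
  (∀ i, (X i).Nonempty) ∧
  (∀ i, ∀ u ∈ X i, X i ⊆ insert u (Q.neighborSet u)) ∧
  (∀ i, ∀ u ∈ X i, ∀ u' ∈ X i,
     insert u (Q.neighborSet u) ⊆ insert u' (Q.neighborSet u') ∨
     insert u' (Q.neighborSet u') ⊆ insert u (Q.neighborSet u)) ∧
  (∀ i, ∀ u ∈ X i, insert u (Q.neighborSet u) ⊆ X (i-1) ∪ X i ∪ X (i+1)) ∧
  (∀ i, ∃ u ∈ X i, X (i-1) ∪ X i ∪ X (i+1) ⊆ insert u (Q.neighborSet u))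

/-- A `k`-ring. -/
def IsRing (k : ℕ) (Q : SimpleGraph W) : Prop :=
  ∃ X : ZMod k → Set W, IsRingPartition Q X

/-- A 5-crown. -/
def IsFiveCrown (Q : SimpleGraph W) : Prop :=
  ∃ X : ZMod 5 → Set W, IsRingPartition Q X ∧
    ∃ istar : ZMod 5, CompleteTo Q (X (istar - 1)) (X (istar - 2)) ∧
      CompleteTo Q (X (istar + 1)) (X (istar + 2))


set_option maxRecDepth 8000 in
private lemma zmod6_bool : ∀ g : ZMod 6 → Bool,
    (∀ i, ¬(g i = true ∧ g (i+2) = true) ∧ ¬(g i = true ∧ g (i+3) = true)) →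
    ∃ i, g i = false ∧ g (i+1) = false ∧ g (i+2) = false := by decide

set_option maxRecDepth 8000 in
private lemma zmod7_bool : ∀ g : ZMod 7 → Bool,
    (∀ i, ¬(g i = true ∧ g (i+2) = true) ∧ ¬(g i = true ∧ g (i+3) = true)) →
    ∃ i, g i = false ∧ g (i+1) = false ∧ g (i+2) = false := by decide

instance cycleG.decAdj (n : ℕ) : DecidableRel (cycleG n).Adj := fun u v =>
  decidable_of_iff' _ (SimpleGraph.fromRel_adj _ u v)

instance T0.decAdj : DecidableRel T0.Adj := fun u v =>
  decidable_of_iff' _ (SimpleGraph.fromRel_adj _ u v)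

theorem statement_8 {W : Type} [Fintype W] (t : ℕ) (ht : 3 ≤ t) (Q : SimpleGraph W)
    (hQ : IsTVilla t Q) :
    (IndFree Q twoP3 ∧ IndFree Q (cycleG 4) ∧ IndFree Q (cycleG 6) ∧
      IndFree Q (cycleG 7) ∧ IndFree Q T0) ∧
    Nonempty (pentagon t ↪g Q) ∧
    Qᶜ.Connected ∧ (∀ v : W, ¬ IsSimplicial Q v) ∧ (∀ v : W, ¬ IsUniversal Q v) := by
  classical
  obtain ⟨A, B, C, hcore, huniv⟩ := hQ
  obtain ⟨hdAB, hdAC, hdBB, hdCC, hdBC, hAcl, hBcl, hCcl, hAne, hBne, hCne,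
    hAB, hAC, hBB, hCC, hBC, hchain, hBCne, hBfull⟩ := hcore
  -- chosen elements
  obtain ⟨a, ha⟩ := hAne
  choose bb hbbmem hbbfull using hBfull
  choose cc hcc using hCne
  obtain ⟨i0, i1, hne01⟩ : ∃ i0 i1 : Fin t, i0 ≠ i1 :=
    ⟨⟨0, by omega⟩, ⟨1, by omega⟩, by simp [Fin.ext_iff]⟩
  have pickne : ∀ i : Fin t, ∃ j, j ≠ i := by
    intro i
    by_cases h : i = i0
    · exact ⟨i1, by rw [h]; exact hne01.symm⟩
    · exact ⟨i0, fun e => h e.symm⟩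
  have dne : ∀ {X Y : Set W}, Disjoint X Y → ∀ {x y : W}, x ∈ X → y ∈ Y → x ≠ y := by
    intro X Y h x y hx hy e
    exact Set.disjoint_left.1 h hx (e ▸ hy)
  -- basic structure lemmas
  have tri : ∀ v : W, v ∈ A ∨ (∃ i, v ∈ B i) ∨ (∃ i, v ∈ C i) := by
    intro v
    have hv : v ∈ A ∪ (⋃ i, B i) ∪ ⋃ i, C i := by rw [huniv]; exact Set.mem_univ v
    rcases hv with (h | h) | h
    · exact Or.inl h
    · exact Or.inr (Or.inl (Set.mem_iUnion.1 h))
    · exact Or.inr (Or.inr (Set.mem_iUnion.1 h))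
  have hCadj : ∀ {u i v j}, u ∈ C i → v ∈ C j → u ≠ v → Q.Adj u v := by
    intro u i v j hu hv hne
    rcases eq_or_ne i j with rfl | hij
    · exact hCcl i hu hv hne
    · exact hCC i j hij u hu v hv
  have hBadjB : ∀ {x i y j}, x ∈ B i → y ∈ B j → Q.Adj x y → i = j := by
    intro x i y j hx hy hadj
    by_contra hij
    exact hBB i j hij x hx y hy hadj
  have hBadjC : ∀ {x i y j}, x ∈ B i → y ∈ C j → Q.Adj x y → i = j := by
    intro x i y j hx hy hadj
    by_contra hij
    exact hBC i j hij x hx y hy hadj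
  have hB3 : ∀ {x i y j z k}, x ∈ B i → y ∈ B j → z ∈ B k →
      Q.Adj x y → Q.Adj y z → x ≠ z → Q.Adj x z := by
    intro x i y j z k hx hy hz hxy hyz hne
    have e1 : i = j := hBadjB hx hy hxy
    have e2 : j = k := hBadjB hy hz hyz
    subst e1; subst e2
    exact hBcl i hx hz hne
  have hNA : ∀ {a' v}, a' ∈ A → v ≠ a' → ¬ Q.Adj a' v → ∃ j, v ∈ C j := by
    intro a' v ha' hne hnadj
    rcases tri v with h | ⟨i, h⟩ | h
    · exact absurd (hAcl ha' h hne.symm) hnadj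
    · exact absurd (hAB i a' ha' v h) hnadj
    · exact h
  have hA2 : ∀ {a' u v}, a' ∈ A → u ≠ a' → v ≠ a' → u ≠ v →
      ¬Q.Adj a' u → ¬Q.Adj a' v → Q.Adj u v := by
    intro a' u v ha' hu hv huv h1 h2
    obtain ⟨i, hui⟩ := hNA ha' hu h1
    obtain ⟨j, hvj⟩ := hNA ha' hv h2
    exact hCadj hui hvj huv
  have clsv : ∀ x : W, x ∉ A → (∃ p, x ∈ B p) ∨ (∃ q, x ∈ C q) := by
    intro x hx
    rcases tri x with h | h | h
    exacts [absurd h hx, Or.inl h, Or.inr h]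
  -- no induced 2P3
  have free2P3 : IndFree Q twoP3 := by
    refine ⟨fun f => ?_⟩
    have fadj : ∀ {x y}, Q.Adj (f x) (f y) ↔ twoP3.Adj x y := fun {x y} => f.map_adj_iff
    set u : Fin 3 → W := fun k => f (Sum.inl k) with hu
    set v : Fin 3 → W := fun k => f (Sum.inr k) with hvdef
    have cross : ∀ k l : Fin 3, ¬ Q.Adj (u k) (v l) := by
      intro k l h
      have := fadj.1 h
      simp [twoP3, SimpleGraph.fromRel_adj] at this
    have crossne : ∀ k l : Fin 3, u k ≠ v l := by
      intro k l h
      exact absurd (f.injective h) (by simp)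
    have hP3 : ∀ x y z : W, Q.Adj x y → Q.Adj y z → ¬Q.Adj x z → x ≠ z →
        ((∃ i, x ∈ B i) ∨ (∃ i, y ∈ B i) ∨ (∃ i, z ∈ B i)) ∧
        ((x ∈ A ∨ ∃ j, x ∈ C j) ∨ (y ∈ A ∨ ∃ j, y ∈ C j) ∨ (z ∈ A ∨ ∃ j, z ∈ C j)) := by
      intro x y z hxy hyz hxz hne
      constructor
      · rcases tri x with hx | ⟨i, hx⟩ | ⟨i, hx⟩
        · rcases tri y with hy | ⟨j, hy⟩ | ⟨j, hy⟩
          · rcases tri z with hz | ⟨k, hz⟩ | ⟨k, hz⟩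
            · exact absurd (hAcl hx hz hne) hxz
            · exact Or.inr (Or.inr ⟨k, hz⟩)
            · exact absurd hyz (hAC k y hy z hz)
          · exact Or.inr (Or.inl ⟨j, hy⟩)
          · exact absurd hxy (hAC j x hx y hy)
        · exact Or.inl ⟨i, hx⟩
        · rcases tri z with hz | ⟨k, hz⟩ | ⟨k, hz⟩
          · rcases tri y with hy | ⟨j, hy⟩ | ⟨j, hy⟩
            · exact absurd hxy (fun h => hAC i y hy x hx h.symm)
            · exact Or.inr (Or.inl ⟨j, hy⟩)
            · exact absurd hyz (fun h => hAC j z hz y hy h.symm)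
          · exact Or.inr (Or.inr ⟨k, hz⟩)
          · exact absurd (hCadj hx hz hne) hxz
      · rcases tri x with hx | ⟨i, hx⟩ | ⟨i, hx⟩
        · exact Or.inl (Or.inl hx)
        · rcases tri y with hy | ⟨j, hy⟩ | ⟨j, hy⟩
          · exact Or.inr (Or.inl (Or.inl hy))
          · rcases tri z with hz | ⟨k, hz⟩ | ⟨k, hz⟩
            · exact Or.inr (Or.inr (Or.inl hz))
            · exact absurd (hB3 hx hy hz hxy hyz hne) hxz
            · exact Or.inr (Or.inr (Or.inr ⟨k, hz⟩))
          · exact Or.inr (Or.inl (Or.inr ⟨j, hy⟩))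
        · exact Or.inl (Or.inr ⟨i, hx⟩)
    have pu01 : Q.Adj (u 0) (u 1) := fadj.2 (by simp [twoP3, SimpleGraph.fromRel_adj, pathGraph_adj])
    have pu12 : Q.Adj (u 1) (u 2) := fadj.2 (by simp [twoP3, SimpleGraph.fromRel_adj, pathGraph_adj])
    have pu02 : ¬ Q.Adj (u 0) (u 2) := fun h => by
      have := fadj.1 h
      simp [twoP3, SimpleGraph.fromRel_adj, pathGraph_adj] at this
    have pune : u 0 ≠ u 2 := fun h => absurd (f.injective h) (by simp [Fin.ext_iff])
    have pv01 : Q.Adj (v 0) (v 1) := fadj.2 (by simp [twoP3, SimpleGraph.fromRel_adj, pathGraph_adj])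
    have pv12 : Q.Adj (v 1) (v 2) := fadj.2 (by simp [twoP3, SimpleGraph.fromRel_adj, pathGraph_adj])
    have pv02 : ¬ Q.Adj (v 0) (v 2) := fun h => by
      have := fadj.1 h
      simp [twoP3, SimpleGraph.fromRel_adj, pathGraph_adj] at this
    have pvne : v 0 ≠ v 2 := fun h => absurd (f.injective h) (by simp [Fin.ext_iff])
    obtain ⟨hPB, hPac⟩ := hP3 (u 0) (u 1) (u 2) pu01 pu12 pu02 pune
    obtain ⟨hP'B, hP'ac⟩ := hP3 (v 0) (v 1) (v 2) pv01 pv12 pv02 pvne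
    have huB : ∃ k i, u k ∈ B i := by
      rcases hPB with ⟨i, h⟩ | ⟨i, h⟩ | ⟨i, h⟩
      exacts [⟨0, i, h⟩, ⟨1, i, h⟩, ⟨2, i, h⟩]
    have hvB : ∃ l j, v l ∈ B j := by
      rcases hP'B with ⟨j, h⟩ | ⟨j, h⟩ | ⟨j, h⟩
      exacts [⟨0, j, h⟩, ⟨1, j, h⟩, ⟨2, j, h⟩]
    have huAC : (∃ k, u k ∈ A) ∨ (∃ k j, u k ∈ C j) := by
      rcases hPac with (h | ⟨j, h⟩) | (h | ⟨j, h⟩) | (h | ⟨j, h⟩)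
      exacts [Or.inl ⟨0, h⟩, Or.inr ⟨0, j, h⟩, Or.inl ⟨1, h⟩, Or.inr ⟨1, j, h⟩,
        Or.inl ⟨2, h⟩, Or.inr ⟨2, j, h⟩]
    have hvAC : (∃ l, v l ∈ A) ∨ (∃ l j, v l ∈ C j) := by
      rcases hP'ac with (h | ⟨j, h⟩) | (h | ⟨j, h⟩) | (h | ⟨j, h⟩)
      exacts [Or.inl ⟨0, h⟩, Or.inr ⟨0, j, h⟩, Or.inl ⟨1, h⟩, Or.inr ⟨1, j, h⟩,
        Or.inl ⟨2, h⟩, Or.inr ⟨2, j, h⟩]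
    rcases huAC with ⟨k, hk⟩ | ⟨k, i, hk⟩
    · obtain ⟨l, j, hl⟩ := hvB
      exact cross k l (hAB j (u k) hk (v l) hl)
    · rcases hvAC with ⟨l, hl⟩ | ⟨l, j, hl⟩
      · obtain ⟨k', i', hk'⟩ := huB
        exact cross k' l ((hAB i' (v l) hl (u k') hk').symm)
      · exact cross k l (hCadj hk hl (crossne k l))
  -- no induced C4
  have freeC4 : IndFree Q (cycleG 4) := by
    refine ⟨fun f => ?_⟩
    have fadj : ∀ {x y}, Q.Adj (f x) (f y) ↔ (cycleG 4).Adj x y := fun {x y} => f.map_adj_iff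
    have a01 : Q.Adj (f 0) (f 1) := fadj.2 (by decide)
    have a12 : Q.Adj (f 1) (f 2) := fadj.2 (by decide)
    have a23 : Q.Adj (f 2) (f 3) := fadj.2 (by decide)
    have a30 : Q.Adj (f 3) (f 0) := fadj.2 (by decide)
    have n02 : ¬ Q.Adj (f 0) (f 2) := fun h => by have := fadj.1 h; revert this; decide
    have n13 : ¬ Q.Adj (f 1) (f 3) := fun h => by have := fadj.1 h; revert this; decide
    have n20 : ¬ Q.Adj (f 2) (f 0) := fun h => n02 h.symm
    have n31 : ¬ Q.Adj (f 3) (f 1) := fun h => n13 h.symm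
    have ne02 : f 0 ≠ f 2 := f.injective.ne (by decide)
    have ne13 : f 1 ≠ f 3 := f.injective.ne (by decide)
    have ne20 : f 2 ≠ f 0 := ne02.symm
    have ne31 : f 3 ≠ f 1 := ne13.symm
    -- no vertex in A
    have noAv : ∀ x0 x1 x2 x3 : W, Q.Adj x0 x1 → Q.Adj x1 x2 → Q.Adj x2 x3 → Q.Adj x3 x0 →
        ¬Q.Adj x0 x2 → ¬Q.Adj x1 x3 → x1 ≠ x3 → x2 ≠ x0 → x0 ∈ A → False := by
      intro x0 x1 x2 x3 b01 b12 b23 b30 m02 m13 ne13' ne20' h0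
      obtain ⟨k, hk⟩ := hNA h0 ne20' m02
      have h1 : x1 ∈ B k := by
        rcases tri x1 with h | ⟨p, h⟩ | ⟨q, h⟩
        · exact absurd b12 (hAC k x1 h x2 hk)
        · have : p = k := hBadjC h hk b12
          exact this ▸ h
        · exact absurd b01 (hAC q x0 h0 x1 h)
      have h3 : x3 ∈ B k := by
        rcases tri x3 with h | ⟨p, h⟩ | ⟨q, h⟩
        · exact absurd b23.symm (hAC k x3 h x2 hk)
        · have : p = k := hBadjC h hk b23.symm
          exact this ▸ h
        · exact absurd b30.symm (hAC q x0 h0 x3 h)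
      exact m13 (hBcl k h1 h3 ne13')
    have noA0 : f 0 ∉ A := noAv (f 0) (f 1) (f 2) (f 3) a01 a12 a23 a30 n02 n13 ne13 ne20
    have noA1 : f 1 ∉ A := noAv (f 1) (f 2) (f 3) (f 0) a12 a23 a30 a01 n13 n20 ne20 ne31
    have noA2 : f 2 ∉ A := noAv (f 2) (f 3) (f 0) (f 1) a23 a30 a01 a12 n20 n31 ne31 ne02
    have noA3 : f 3 ∉ A := noAv (f 3) (f 0) (f 1) (f 2) a30 a01 a12 a23 n31 n02 ne02 ne13
    -- diagonal with both ends in B is impossible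
    have diagB : ∀ x y z : W, ∀ p q, x ∈ B p → z ∈ B q → y ∉ A →
        Q.Adj x y → Q.Adj y z → ¬ Q.Adj x z → x ≠ z → False := by
      intro x y z p q hx hz hyA hxy hyz hnadj hne
      rcases clsv y hyA with ⟨r, hy⟩ | ⟨r, hy⟩
      · have e1 : p = r := hBadjB hx hy hxy
        have e2 : r = q := hBadjB hy hz hyz
        exact hnadj (hBcl p hx ((e1.trans e2).symm ▸ hz) hne)
      · have e1 : p = r := hBadjC hx hy hxy
        have e2 : q = r := hBadjC hz hy hyz.symm
        exact hnadj (hBcl p hx ((e1.trans e2.symm).symm ▸ hz) hne)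
    -- the mixed configuration
    have mainBC : ∀ x0 x1 x2 x3 : W, ∀ p r s w, x0 ∈ B p → x1 ∈ B r → x2 ∈ C s → x3 ∈ C w →
        Q.Adj x0 x1 → Q.Adj x1 x2 → Q.Adj x2 x3 → Q.Adj x3 x0 →
        ¬Q.Adj x0 x2 → ¬Q.Adj x1 x3 → False := by
      intro x0 x1 x2 x3 p r s w h0 h1 h2 h3 b01 b12 b23 b30 m02 m13
      obtain rfl : p = r := hBadjB h0 h1 b01
      obtain rfl : p = s := hBadjC h1 h2 b12
      obtain rfl : p = w := hBadjC h0 h3 b30.symm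
      rcases hchain p x0 h0 x1 h1 with hss | hss
      · exact m13 (hss ⟨b30.symm, h3⟩).1
      · exact m02 (hss ⟨b12, h2⟩).1
    rcases clsv (f 0) noA0 with ⟨p0, h0⟩ | ⟨p0, h0⟩ <;>
      rcases clsv (f 1) noA1 with ⟨p1, h1⟩ | ⟨p1, h1⟩ <;>
        rcases clsv (f 2) noA2 with ⟨p2, h2⟩ | ⟨p2, h2⟩ <;>
          rcases clsv (f 3) noA3 with ⟨p3, h3⟩ | ⟨p3, h3⟩ <;>
    first
      | exact n02 (hCadj h0 h2 ne02)
      | exact n13 (hCadj h1 h3 ne13)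
      | exact diagB (f 0) (f 1) (f 2) p0 p2 h0 h2 noA1 a01 a12 n02 ne02
      | exact diagB (f 1) (f 2) (f 3) p1 p3 h1 h3 noA2 a12 a23 n13 ne13
      | exact mainBC (f 0) (f 1) (f 2) (f 3) p0 p1 p2 p3 h0 h1 h2 h3 a01 a12 a23 a30 n02 n13
      | exact mainBC (f 1) (f 2) (f 3) (f 0) p1 p2 p3 p0 h1 h2 h3 h0 a12 a23 a30 a01 n13 n20
      | exact mainBC (f 2) (f 3) (f 0) (f 1) p2 p3 p0 p1 h2 h3 h0 h1 a23 a30 a01 a12 n20 n31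
      | exact mainBC (f 3) (f 0) (f 1) (f 2) p3 p0 p1 p2 h3 h0 h1 h2 a30 a01 a12 a23 n31 n02
  -- no induced C6
  have freeC6 : IndFree Q (cycleG 6) := by
    refine ⟨fun f => ?_⟩
    have fadj : ∀ {x y}, Q.Adj (f x) (f y) ↔ (cycleG 6).Adj x y := fun {x y} => f.map_adj_iff
    have noA : ∀ i : ZMod 6, f i ∉ A := by
      intro i hA
      have h2 : ¬ Q.Adj (f i) (f (i+2)) := fun h =>
        (by decide : ∀ i : ZMod 6, ¬(cycleG 6).Adj i (i+2)) i (fadj.1 h)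
      have h4 : ¬ Q.Adj (f i) (f (i+4)) := fun h =>
        (by decide : ∀ i : ZMod 6, ¬(cycleG 6).Adj i (i+4)) i (fadj.1 h)
      have := hA2 hA (f.injective.ne ((by decide : ∀ i : ZMod 6, i+2 ≠ i) i))
        (f.injective.ne ((by decide : ∀ i : ZMod 6, i+4 ≠ i) i))
        (f.injective.ne ((by decide : ∀ i : ZMod 6, i+2 ≠ i+4) i)) h2 h4
      exact (by decide : ∀ i : ZMod 6, ¬(cycleG 6).Adj (i+2) (i+4)) i (fadj.1 this)
    set g : ZMod 6 → Bool := fun i => decide (∃ q, f i ∈ C q) with hg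
    have hcond : ∀ i : ZMod 6, ¬(g i = true ∧ g (i+2) = true) ∧ ¬(g i = true ∧ g (i+3) = true) := by
      intro i
      constructor
      · rintro ⟨hi, hj⟩
        obtain ⟨q1, hq1⟩ := of_decide_eq_true hi
        obtain ⟨q2, hq2⟩ := of_decide_eq_true hj
        have := hCadj hq1 hq2 (f.injective.ne ((by decide : ∀ i : ZMod 6, i ≠ i+2) i))
        exact (by decide : ∀ i : ZMod 6, ¬(cycleG 6).Adj i (i+2)) i (fadj.1 this)
      · rintro ⟨hi, hj⟩
        obtain ⟨q1, hq1⟩ := of_decide_eq_true hi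
        obtain ⟨q2, hq2⟩ := of_decide_eq_true hj
        have := hCadj hq1 hq2 (f.injective.ne ((by decide : ∀ i : ZMod 6, i ≠ i+3) i))
        exact (by decide : ∀ i : ZMod 6, ¬(cycleG 6).Adj i (i+3)) i (fadj.1 this)
    obtain ⟨i, hgi, hgi1, hgi2⟩ := zmod6_bool g hcond
    have getB : ∀ j : ZMod 6, g j = false → ∃ p, f j ∈ B p := by
      intro j hj
      rcases clsv (f j) (noA j) with h | h
      · exact h
      · exact absurd h (of_decide_eq_false hj)
    obtain ⟨p, hp⟩ := getB i hgi
    obtain ⟨p1, hp1⟩ := getB (i+1) hgi1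
    obtain ⟨p2, hp2⟩ := getB (i+2) hgi2
    have := hB3 hp hp1 hp2
      (fadj.2 ((by decide : ∀ i : ZMod 6, (cycleG 6).Adj i (i+1)) i))
      (fadj.2 ((by decide : ∀ i : ZMod 6, (cycleG 6).Adj (i+1) (i+2)) i))
      (f.injective.ne ((by decide : ∀ i : ZMod 6, i ≠ i+2) i))
    exact (by decide : ∀ i : ZMod 6, ¬(cycleG 6).Adj i (i+2)) i (fadj.1 this)
  -- no induced C7
  have freeC7 : IndFree Q (cycleG 7) := by
    refine ⟨fun f => ?_⟩
    have fadj : ∀ {x y}, Q.Adj (f x) (f y) ↔ (cycleG 7).Adj x y := fun {x y} => f.map_adj_iff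
    have noA : ∀ i : ZMod 7, f i ∉ A := by
      intro i hA
      have h2 : ¬ Q.Adj (f i) (f (i+2)) := fun h =>
        (by decide : ∀ i : ZMod 7, ¬(cycleG 7).Adj i (i+2)) i (fadj.1 h)
      have h4 : ¬ Q.Adj (f i) (f (i+4)) := fun h =>
        (by decide : ∀ i : ZMod 7, ¬(cycleG 7).Adj i (i+4)) i (fadj.1 h)
      have := hA2 hA (f.injective.ne ((by decide : ∀ i : ZMod 7, i+2 ≠ i) i))
        (f.injective.ne ((by decide : ∀ i : ZMod 7, i+4 ≠ i) i))
        (f.injective.ne ((by decide : ∀ i : ZMod 7, i+2 ≠ i+4) i)) h2 h4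
      exact (by decide : ∀ i : ZMod 7, ¬(cycleG 7).Adj (i+2) (i+4)) i (fadj.1 this)
    set g : ZMod 7 → Bool := fun i => decide (∃ q, f i ∈ C q) with hg
    have hcond : ∀ i : ZMod 7, ¬(g i = true ∧ g (i+2) = true) ∧ ¬(g i = true ∧ g (i+3) = true) := by
      intro i
      constructor
      · rintro ⟨hi, hj⟩
        obtain ⟨q1, hq1⟩ := of_decide_eq_true hi
        obtain ⟨q2, hq2⟩ := of_decide_eq_true hj
        have := hCadj hq1 hq2 (f.injective.ne ((by decide : ∀ i : ZMod 7, i ≠ i+2) i))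
        exact (by decide : ∀ i : ZMod 7, ¬(cycleG 7).Adj i (i+2)) i (fadj.1 this)
      · rintro ⟨hi, hj⟩
        obtain ⟨q1, hq1⟩ := of_decide_eq_true hi
        obtain ⟨q2, hq2⟩ := of_decide_eq_true hj
        have := hCadj hq1 hq2 (f.injective.ne ((by decide : ∀ i : ZMod 7, i ≠ i+3) i))
        exact (by decide : ∀ i : ZMod 7, ¬(cycleG 7).Adj i (i+3)) i (fadj.1 this)
    obtain ⟨i, hgi, hgi1, hgi2⟩ := zmod7_bool g hcond
    have getB : ∀ j : ZMod 7, g j = false → ∃ p, f j ∈ B p := by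
      intro j hj
      rcases clsv (f j) (noA j) with h | h
      · exact h
      · exact absurd h (of_decide_eq_false hj)
    obtain ⟨p, hp⟩ := getB i hgi
    obtain ⟨p1, hp1⟩ := getB (i+1) hgi1
    obtain ⟨p2, hp2⟩ := getB (i+2) hgi2
    have := hB3 hp hp1 hp2
      (fadj.2 ((by decide : ∀ i : ZMod 7, (cycleG 7).Adj i (i+1)) i))
      (fadj.2 ((by decide : ∀ i : ZMod 7, (cycleG 7).Adj (i+1) (i+2)) i))
      (f.injective.ne ((by decide : ∀ i : ZMod 7, i ≠ i+2) i))
    exact (by decide : ∀ i : ZMod 7, ¬(cycleG 7).Adj i (i+2)) i (fadj.1 this)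
  -- no induced T0
  have freeT0 : IndFree Q T0 := by
    refine ⟨fun f => ?_⟩
    have fadj : ∀ {x y}, Q.Adj (f x) (f y) ↔ T0.Adj x y := fun {x y} => f.map_adj_iff
    have noA : ∀ v : Fin 9, f v ∉ A := by
      intro v hA
      have key : ∀ p q : Fin 9, ¬T0.Adj v p → ¬T0.Adj v q → ¬T0.Adj p q →
          p ≠ v → q ≠ v → p ≠ q → False := by
        intro p q h1 h2 h3 n1 n2 n3
        exact h3 (fadj.1 (hA2 hA (f.injective.ne n1) (f.injective.ne n2) (f.injective.ne n3)
          (fun h => h1 (fadj.1 h)) (fun h => h2 (fadj.1 h))))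
      fin_cases v
      · exact key 3 7 (by decide) (by decide) (by decide) (by decide) (by decide) (by decide)
      · exact key 2 7 (by decide) (by decide) (by decide) (by decide) (by decide) (by decide)
      · exact key 3 4 (by decide) (by decide) (by decide) (by decide) (by decide) (by decide)
      · exact key 2 4 (by decide) (by decide) (by decide) (by decide) (by decide) (by decide)
      · exact key 2 5 (by decide) (by decide) (by decide) (by decide) (by decide) (by decide)
      · exact key 2 3 (by decide) (by decide) (by decide) (by decide) (by decide) (by decide)
      · exact key 4 5 (by decide) (by decide) (by decide) (by decide) (by decide) (by decide)
      · exact key 2 3 (by decide) (by decide) (by decide) (by decide) (by decide) (by decide)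
      · exact key 2 3 (by decide) (by decide) (by decide) (by decide) (by decide) (by decide)
    have hv : ∀ v : Fin 9, (∃ p, f v ∈ B p) ∨ (∃ q, f v ∈ C q) := fun v => clsv (f v) (noA v)
    have hCpair : ∀ u v : Fin 9, ∀ q r, ¬T0.Adj u v → u ≠ v → f u ∈ C q → f v ∈ C r → False :=
      fun u v q r hn hne hu' hv' => hn (fadj.1 (hCadj hu' hv' (f.injective.ne hne)))
    have hBpath : ∀ u v w : Fin 9, ∀ p q r, T0.Adj u v → T0.Adj v w → ¬T0.Adj u w → u ≠ w →
        f u ∈ B p → f v ∈ B q → f w ∈ B r → False :=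
      fun u v w p q r auv avw hn hne hu' hv' hw' =>
        hn (fadj.1 (hB3 hu' hv' hw' (fadj.2 auv) (fadj.2 avw) (f.injective.ne hne)))
    rcases hv 6 with ⟨p6, h6⟩ | ⟨q6, h6⟩
    · rcases hv 2 with ⟨p2, h2⟩ | ⟨q2, h2⟩
      · rcases hv 3 with ⟨p3, h3⟩ | ⟨q3, h3⟩
        · exact hBpath 2 6 3 _ _ _ (by decide) (by decide) (by decide) (by decide) h2 h6 h3
        · rcases hv 7 with ⟨p7, h7⟩ | ⟨q7, h7⟩
          · rcases hv 8 with ⟨p8, h8⟩ | ⟨q8, h8⟩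
            · rcases hv 4 with ⟨p4, h4⟩ | ⟨q4, h4⟩
              · exact hBpath 4 7 8 _ _ _ (by decide) (by decide) (by decide) (by decide) h4 h7 h8
              · exact hCpair 3 4 _ _ (by decide) (by decide) h3 h4
            · exact hCpair 3 8 _ _ (by decide) (by decide) h3 h8
          · exact hCpair 3 7 _ _ (by decide) (by decide) h3 h7
      · rcases hv 7 with ⟨p7, h7⟩ | ⟨q7, h7⟩
        · rcases hv 8 with ⟨p8, h8⟩ | ⟨q8, h8⟩
          · rcases hv 4 with ⟨p4, h4⟩ | ⟨q4, h4⟩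
            · exact hBpath 4 7 8 _ _ _ (by decide) (by decide) (by decide) (by decide) h4 h7 h8
            · exact hCpair 2 4 _ _ (by decide) (by decide) h2 h4
          · exact hCpair 2 8 _ _ (by decide) (by decide) h2 h8
        · exact hCpair 2 7 _ _ (by decide) (by decide) h2 h7
    · rcases hv 0 with ⟨p0, h0⟩ | ⟨q0, h0⟩
      · rcases hv 4 with ⟨p4, h4⟩ | ⟨q4, h4⟩
        · rcases hv 5 with ⟨p5, h5⟩ | ⟨q5, h5⟩
          · exact hBpath 4 0 5 _ _ _ (by decide) (by decide) (by decide) (by decide) h4 h0 h5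
          · exact hCpair 5 6 _ _ (by decide) (by decide) h5 h6
        · exact hCpair 4 6 _ _ (by decide) (by decide) h4 h6
      · exact hCpair 0 6 _ _ (by decide) (by decide) h0 h6
  -- pentagon embedding
  have keyBC : ∀ i j : Fin t, Q.Adj (bb i) (cc j) ↔
      (pentagon t).Adj (Sum.inr (Sum.inl i)) (Sum.inr (Sum.inr j)) := by
    intro i j
    have : (pentagon t).Adj (Sum.inr (Sum.inl i)) (Sum.inr (Sum.inr j)) ↔ i = j := by
      simp [pentagon, SimpleGraph.fromRel_adj]
    rw [this]
    constructor
    · intro h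
      exact hBadjC (hbbmem i) (hcc j) h
    · rintro rfl
      exact hbbfull i (hcc i)
  have pentEmb : Nonempty (pentagon t ↪g Q) := by
    set F : Unit ⊕ Fin t ⊕ Fin t → W := Sum.elim (fun _ => a) (Sum.elim bb cc) with hF
    have hinj : Function.Injective F := by
      rintro (⟨⟩ | i | i) (⟨⟩ | j | j) h <;>
        simp only [F, Sum.elim_inl, Sum.elim_inr] at h
      · rfl
      · exact absurd h (dne (hdAB j) ha (hbbmem j))
      · exact absurd h (dne (hdAC j) ha (hcc j))
      · exact absurd h.symm (dne (hdAB i) ha (hbbmem i))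
      · have : i = j := by
          by_contra hij
          exact dne (hdBB i j hij) (hbbmem i) (hbbmem j) h
        rw [this]
      · exact absurd h (dne (hdBC i j) (hbbmem i) (hcc j))
      · exact absurd h.symm (dne (hdAC i) ha (hcc i))
      · exact absurd h.symm (dne (hdBC j i) (hbbmem j) (hcc i))
      · have : i = j := by
          by_contra hij
          exact dne (hdCC i j hij) (hcc i) (hcc j) h
        rw [this]
    refine ⟨⟨⟨F, hinj⟩, @fun x y => ?_⟩⟩
    obtain (⟨⟩ | i | i) := x <;> obtain (⟨⟩ | j | j) := y <;>
      simp only [Function.Embedding.coeFn_mk, F, Sum.elim_inl, Sum.elim_inr]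
    · exact iff_of_false (Q.irrefl) (by simp [pentagon, SimpleGraph.fromRel_adj])
    · exact iff_of_true (hAB j a ha (bb j) (hbbmem j))
        (by simp [pentagon, SimpleGraph.fromRel_adj])
    · exact iff_of_false (hAC j a ha (cc j) (hcc j))
        (by simp [pentagon, SimpleGraph.fromRel_adj])
    · exact iff_of_true ((hAB i a ha (bb i) (hbbmem i)).symm)
        (by simp [pentagon, SimpleGraph.fromRel_adj])
    · refine iff_of_false ?_ (by simp [pentagon, SimpleGraph.fromRel_adj])
      rcases eq_or_ne i j with rfl | hij
      · exact Q.irrefl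
      · exact hBB i j hij (bb i) (hbbmem i) (bb j) (hbbmem j)
    · exact keyBC i j
    · exact iff_of_false (fun h => hAC i a ha (cc i) (hcc i) h.symm)
        (by simp [pentagon, SimpleGraph.fromRel_adj])
    · rw [Q.adj_comm, (pentagon t).adj_comm]
      exact keyBC j i
    · have : (pentagon t).Adj (Sum.inr (Sum.inr i)) (Sum.inr (Sum.inr j)) ↔ i ≠ j := by
        simp [pentagon, SimpleGraph.fromRel_adj]
      rw [this]
      constructor
      · intro h e
        exact h.ne (congrArg cc e)
      · intro hij
        exact hCadj (hcc i) (hcc j) (dne (hdCC i j hij) (hcc i) (hcc j))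
  -- anticonnectedness
  have reach : ∀ v : W, Qᶜ.Reachable v a := by
    have ca : ∀ j : Fin t, Qᶜ.Adj (cc j) a :=
      fun j => (Q.compl_adj _ _).2 ⟨(dne (hdAC j) ha (hcc j)).symm,
        fun h => hAC j a ha (cc j) (hcc j) h.symm⟩
    intro v
    rcases tri v with hv | ⟨i, hv⟩ | ⟨i, hv⟩
    · have h1 : Qᶜ.Adj v (cc i0) := (Q.compl_adj _ _).2 ⟨dne (hdAC i0) hv (hcc i0),
        hAC i0 v hv (cc i0) (hcc i0)⟩
      exact h1.reachable.trans (ca i0).reachable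
    · obtain ⟨j, hj⟩ := pickne i
      have h1 : Qᶜ.Adj v (cc j) := (Q.compl_adj _ _).2 ⟨dne (hdBC i j) hv (hcc j),
        hBC i j hj.symm v hv (cc j) (hcc j)⟩
      exact h1.reachable.trans (ca j).reachable
    · have h1 : Qᶜ.Adj v a := (Q.compl_adj _ _).2 ⟨(dne (hdAC i) ha hv).symm,
        fun h => hAC i a ha v hv h.symm⟩
      exact h1.reachable
  haveI : Nonempty W := ⟨a⟩
  have hconn : Qᶜ.Connected := ⟨fun u v => (reach u).trans (reach v).symm⟩
  -- no simplicial vertices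
  have hnosimp : ∀ v : W, ¬ IsSimplicial Q v := by
    intro v hs
    rcases tri v with hv | ⟨i, hv⟩ | ⟨i, hv⟩
    · obtain ⟨b0, hb0⟩ := hBne i0
      obtain ⟨b1, hb1⟩ := hBne i1
      have m0 : b0 ∈ Q.neighborSet v := hAB i0 v hv b0 hb0
      have m1 : b1 ∈ Q.neighborSet v := hAB i1 v hv b1 hb1
      exact hBB i0 i1 hne01 b0 hb0 b1 hb1
        (hs m0 m1 (dne (hdBB i0 i1 hne01) hb0 hb1))
    · obtain ⟨c, hcadj, hcC⟩ := hBCne i v hv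
      have m0 : a ∈ Q.neighborSet v := (hAB i a ha v hv).symm
      exact hAC i a ha c hcC (hs m0 hcadj (dne (hdAC i) ha hcC))
    · have m0 : bb i ∈ Q.neighborSet v := (hbbfull i hv).symm
      obtain ⟨j, hj⟩ := pickne i
      have m1 : cc j ∈ Q.neighborSet v :=
        hCadj hv (hcc j) (dne (hdCC i j hj.symm) hv (hcc j))
      exact hBC i j hj.symm (bb i) (hbbmem i) (cc j) (hcc j)
        (hs m0 m1 (dne (hdBC i j) (hbbmem i) (hcc j)))
  -- no universal vertices
  have hnouniv : ∀ v : W, ¬ IsUniversal Q v := by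
    intro v hu
    rcases tri v with hv | ⟨i, hv⟩ | ⟨i, hv⟩
    · exact hAC i0 v hv (cc i0) (hcc i0) (hu (cc i0) (dne (hdAC i0) hv (hcc i0)).symm)
    · obtain ⟨j, hj⟩ := pickne i
      exact hBC i j hj.symm v hv (cc j) (hcc j)
        (hu (cc j) (dne (hdBC i j) hv (hcc j)).symm)
    · exact hAC i a ha v hv (hu a (dne (hdAC i) ha hv)).symm
  exact ⟨⟨free2P3, freeC4, freeC6, freeC7, freeT0⟩, pentEmb, hconn, hnosimp, hnouniv⟩

end Paper
end

section
/- Let t ≥ 3 be an integer. Every t-mansion is (2P_3, C_4, C_6, C_7, T_0)-free and contains an induced t-pentagon. Moreover, every t-mansion is anticonnected and contains no simplicial and no universal vertices. -/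
namespace Paper

open SimpleGraph

variable {V : Type} {W : Type}

/-! ### Auxiliary infrastructure for `statement_9` -/

lemma set_dne {α : Type*} {s u : Set α} {x y : α} (h : Disjoint s u) (hx : x ∈ s)
    (hy : y ∈ u) : x ≠ y :=
  fun he => Set.disjoint_left.mp h hx (by rw [he]; exact hy)

lemma cycleG_adj {n : ℕ} (a b : ZMod n) :
    (cycleG n).Adj a b ↔ a ≠ b ∧ (b = a + 1 ∨ a = b + 1) :=
  SimpleGraph.fromRel_adj _ _ _

/-- A bundled "t-mansion context": all the facts we need about a `t`-mansion. -/
structure MCtx {W : Type} (Q : SimpleGraph W) (t : ℕ) where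
  ht : 3 ≤ t
  A : Set W
  F : Set W
  X : Set W
  Y : Set W
  B : Fin t → Set W
  C : Fin t → Set W
  j : Fin t
  part : ∀ v, v ∈ A ∨ (∃ i, v ∈ B i) ∨ (∃ i, v ∈ C i) ∨ v ∈ F ∨ v ∈ X ∨ v ∈ Y
  cA : Q.IsClique A
  cB : ∀ i, Q.IsClique (B i)
  cC : ∀ i, Q.IsClique (C i)
  cF : Q.IsClique F
  cX : Q.IsClique X
  cY : Q.IsClique Y
  AB : ∀ i, CompleteTo Q A (B i)
  AC : ∀ i, AnticompleteTo Q A (C i)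
  BB : ∀ i k, i ≠ k → AnticompleteTo Q (B i) (B k)
  CCm : ∀ i k, i ≠ k → CompleteTo Q (C i) (C k)
  BCa : ∀ i k, i ≠ k → AnticompleteTo Q (B i) (C k)
  nest : ∀ i, ∀ b ∈ B i, ∀ b' ∈ B i,
    Q.neighborSet b ∩ C i ⊆ Q.neighborSet b' ∩ C i ∨
    Q.neighborSet b' ∩ C i ⊆ Q.neighborSet b ∩ C i
  BCne : ∀ i, ∀ b ∈ B i, (Q.neighborSet b ∩ C i).Nonempty
  tp : ∀ i, ∃ b ∈ B i, C i ⊆ Q.neighborSet b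
  Ane : A.Nonempty
  Bne : ∀ i, (B i).Nonempty
  Cne : ∀ i, (C i).Nonempty
  Fne : F.Nonempty
  FA : CompleteTo Q F A
  FB : ∀ i, i ≠ j → CompleteTo Q F (B i)
  FC : ∀ i, i ≠ j → CompleteTo Q F (C i)
  FBj : AnticompleteTo Q F (B j)
  FCj : AnticompleteTo Q F (C j)
  BjCj : CompleteTo Q (B j) (C j)
  XA : CompleteTo Q X A
  XBj : CompleteTo Q X (B j)
  XB : ∀ i, i ≠ j → AnticompleteTo Q X (B i)
  XC : ∀ i, AnticompleteTo Q X (C i)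
  FXc : CompleteTo Q F X
  FYc : CompleteTo Q F Y
  XYa : AnticompleteTo Q X Y
  YC : ∀ i, CompleteTo Q Y (C i)
  YA : AnticompleteTo Q Y A
  YB : ∀ i, AnticompleteTo Q Y (B i)
  dAB : ∀ i, Disjoint A (B i)
  dAC : ∀ i, Disjoint A (C i)
  dAY : Disjoint A Y
  dBB : ∀ i k, i ≠ k → Disjoint (B i) (B k)
  dCC : ∀ i k, i ≠ k → Disjoint (C i) (C k)
  dBC : ∀ i k, Disjoint (B i) (C k)
  dBF : ∀ i, Disjoint (B i) F
  dCF : ∀ i, Disjoint (C i) F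
  dCX : ∀ i, Disjoint (C i) X

namespace MCtx

variable {W : Type} {Q : SimpleGraph W} {t : ℕ} (c : MCtx Q t)
include c

lemma bbEq {i k : Fin t} {u w : W} (hu : u ∈ c.B i) (hw : w ∈ c.B k)
    (h : Q.Adj u w) : i = k :=
  by_contra fun hne => c.BB i k hne u hu w hw h

lemma bcEq {i k : Fin t} {u w : W} (hu : u ∈ c.B i) (hw : w ∈ c.C k)
    (h : Q.Adj u w) : i = k :=
  by_contra fun hne => c.BCa i k hne u hu w hw h

/-- Non-neighbours of a vertex of `A` lie in `C ∪ Y`. -/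
lemma nnA {a v : W} (ha : a ∈ c.A) (hv : v ≠ a) (hn : ¬ Q.Adj a v) :
    (∃ i, v ∈ c.C i) ∨ v ∈ c.Y := by
  rcases c.part v with h | ⟨i, h⟩ | ⟨i, h⟩ | h | h | h
  · exact absurd (c.cA ha h (Ne.symm hv)) hn
  · exact absurd (c.AB i a ha v h) hn
  · exact Or.inl ⟨i, h⟩
  · exact absurd (c.FA v h a ha).symm hn
  · exact absurd (c.XA v h a ha).symm hn
  · exact Or.inr h

/-- Non-neighbours of a vertex of `F` lie in `B j ∪ C j`. -/
lemma nnF {f v : W} (hf : f ∈ c.F) (hv : v ≠ f) (hn : ¬ Q.Adj f v) :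
    v ∈ c.B c.j ∨ v ∈ c.C c.j := by
  rcases c.part v with h | ⟨i, h⟩ | ⟨i, h⟩ | h | h | h
  · exact absurd (c.FA f hf v h) hn
  · by_cases hij : i = c.j
    · exact Or.inl (hij ▸ h)
    · exact absurd (c.FB i hij f hf v h) hn
  · by_cases hij : i = c.j
    · exact Or.inr (hij ▸ h)
    · exact absurd (c.FC i hij f hf v h) hn
  · exact absurd (c.cF hf h (Ne.symm hv)) hn
  · exact absurd (c.FXc f hf v h) hn
  · exact absurd (c.FYc f hf v h) hn

/-- Non-neighbours of a vertex of `Y` lie in `A ∪ B ∪ X`. -/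
lemma nnY {y v : W} (hy : y ∈ c.Y) (hv : v ≠ y) (hn : ¬ Q.Adj y v) :
    v ∈ c.A ∨ (∃ i, v ∈ c.B i) ∨ v ∈ c.X := by
  rcases c.part v with h | ⟨i, h⟩ | ⟨i, h⟩ | h | h | h
  · exact Or.inl h
  · exact Or.inr (Or.inl ⟨i, h⟩)
  · exact absurd (c.YC i y hy v h) hn
  · exact absurd (c.FYc v h y hy).symm hn
  · exact Or.inr (Or.inr h)
  · exact absurd (c.cY hy h (Ne.symm hv)) hn

/-- `C ∪ Y` is a clique. -/
lemma adjCY {u v : W} (hu : (∃ i, u ∈ c.C i) ∨ u ∈ c.Y)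
    (hv : (∃ i, v ∈ c.C i) ∨ v ∈ c.Y) (hne : u ≠ v) : Q.Adj u v := by
  rcases hu with ⟨i, hi⟩ | hyu
  · rcases hv with ⟨k, hk⟩ | hyv
    · by_cases hik : i = k
      · subst hik; exact c.cC i hi hk hne
      · exact c.CCm i k hik u hi v hk
    · exact (c.YC i v hyv u hi).symm
  · rcases hv with ⟨k, hk⟩ | hyv
    · exact c.YC k u hyu v hk
    · exact c.cY hyu hyv hne

/-- `B j ∪ C j` is a clique. -/
lemma adjBjCj {u v : W} (hu : u ∈ c.B c.j ∨ u ∈ c.C c.j)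
    (hv : v ∈ c.B c.j ∨ v ∈ c.C c.j) (hne : u ≠ v) : Q.Adj u v := by
  rcases hu with hu | hu <;> rcases hv with hv | hv
  · exact c.cB c.j hu hv hne
  · exact c.BjCj u hu v hv
  · exact (c.BjCj v hv u hu).symm
  · exact c.cC c.j hu hv hne

/-- `B j ∪ X` is a clique. -/
lemma adjBjX {u v : W} (hu : u ∈ c.B c.j ∨ u ∈ c.X)
    (hv : v ∈ c.B c.j ∨ v ∈ c.X) (hne : u ≠ v) : Q.Adj u v := by
  rcases hu with hu | hu <;> rcases hv with hv | hv
  · exact c.cB c.j hu hv hne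
  · exact (c.XBj v hv u hu).symm
  · exact c.XBj u hu v hv
  · exact c.cX hu hv hne

/-- `A ∪ F ∪ X` is a clique. -/
lemma adjAFX {u v : W} (hu : u ∈ c.A ∨ u ∈ c.F ∨ u ∈ c.X)
    (hv : v ∈ c.A ∨ v ∈ c.F ∨ v ∈ c.X) (hne : u ≠ v) : Q.Adj u v := by
  rcases hu with hu | hu | hu <;> rcases hv with hv | hv | hv
  · exact c.cA hu hv hne
  · exact (c.FA v hv u hu).symm
  · exact (c.XA v hv u hu).symm
  · exact c.FA u hu v hv
  · exact c.cF hu hv hne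
  · exact c.FXc u hu v hv
  · exact c.XA u hu v hv
  · exact (c.FXc v hv u hu).symm
  · exact c.cX hu hv hne

/-- There is no induced `P₃` inside `B ∪ X`. -/
lemma noP3BX {u v w : W} (hu : (∃ i, u ∈ c.B i) ∨ u ∈ c.X)
    (hv : (∃ i, v ∈ c.B i) ∨ v ∈ c.X) (hw : (∃ i, w ∈ c.B i) ∨ w ∈ c.X)
    (h1 : Q.Adj u v) (h2 : Q.Adj v w) (hne : u ≠ w) : Q.Adj u w := by
  rcases hv with ⟨i, hvB⟩ | hvX
  · have hu' : u ∈ c.B i ∨ (u ∈ c.X ∧ i = c.j) := by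
      rcases hu with ⟨k, hk⟩ | hx
      · exact Or.inl ((c.bbEq hk hvB h1) ▸ hk)
      · exact Or.inr ⟨hx, by_contra fun hij => c.XB i hij u hx v hvB h1⟩
    have hw' : w ∈ c.B i ∨ (w ∈ c.X ∧ i = c.j) := by
      rcases hw with ⟨k, hk⟩ | hx
      · exact Or.inl ((c.bbEq hk hvB h2.symm) ▸ hk)
      · exact Or.inr ⟨hx, by_contra fun hij => c.XB i hij w hx v hvB h2.symm⟩
    rcases hu' with hu' | ⟨hux, hij⟩ <;> rcases hw' with hw' | ⟨hwx, hij'⟩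
    · exact c.cB i hu' hw' hne
    · exact (c.XBj w hwx u (hij' ▸ hu')).symm
    · exact c.XBj u hux w (hij ▸ hw')
    · exact c.cX hux hwx hne
  · have hu' : u ∈ c.B c.j ∨ u ∈ c.X := by
      rcases hu with ⟨k, hk⟩ | hx
      · exact Or.inl ((by_contra fun hk' => c.XB k hk' v hvX u hk h1.symm : k = c.j) ▸ hk)
      · exact Or.inr hx
    have hw' : w ∈ c.B c.j ∨ w ∈ c.X := by
      rcases hw with ⟨k, hk⟩ | hx
      · exact Or.inl ((by_contra fun hk' => c.XB k hk' v hvX w hk h2 : k = c.j) ▸ hk)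
      · exact Or.inr hx
    exact c.adjBjX hu' hw' hne

/-- Two nonadjacent non-neighbours of a vertex of `A ∪ F` must be adjacent. -/
lemma elimPair {w u u' : W} (hw : w ∈ c.A ∨ w ∈ c.F) (h1 : ¬ Q.Adj w u)
    (h2 : ¬ Q.Adj w u') (n1 : u ≠ w) (n2 : u' ≠ w) (nuu : u ≠ u') : Q.Adj u u' := by
  rcases hw with hw | hw
  · exact c.adjCY (c.nnA hw n1 h1) (c.nnA hw n2 h2) nuu
  · have a1 := c.nnF hw n1 h1
    have a2 := c.nnF hw n2 h2
    exact c.adjBjCj a1 a2 nuu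

/-- Neighbours of a vertex of `Y` avoiding `F` are pairwise adjacent. -/
lemma elimYnbr {w u u' : W} (hw : w ∈ c.Y) (h1 : Q.Adj w u) (h2 : Q.Adj w u')
    (hFu : u ∉ c.F) (hFu' : u' ∉ c.F) (hne : u ≠ u') : Q.Adj u u' := by
  have cls : ∀ z, Q.Adj w z → z ∉ c.F → (∃ i, z ∈ c.C i) ∨ z ∈ c.Y := by
    intro z hz hzF
    rcases c.part z with h | ⟨i, h⟩ | ⟨i, h⟩ | h | h | h
    · exact absurd hz (c.YA w hw z h)
    · exact absurd hz (c.YB i w hw z h)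
    · exact Or.inl ⟨i, h⟩
    · exact absurd h hzF
    · exact absurd hz.symm (c.XYa z h w hw)
    · exact Or.inr h
  exact c.adjCY (cls u h1 hFu) (cls u' h2 hFu') hne

/-- Neighbours of a vertex of `X` avoiding `A` and `F` are pairwise adjacent. -/
lemma elimXnbr {w u u' : W} (hw : w ∈ c.X) (h1 : Q.Adj w u) (h2 : Q.Adj w u')
    (hAu : u ∉ c.A) (hFu : u ∉ c.F) (hAu' : u' ∉ c.A) (hFu' : u' ∉ c.F)
    (hne : u ≠ u') : Q.Adj u u' := by
  have cls : ∀ z, Q.Adj w z → z ∉ c.A → z ∉ c.F → z ∈ c.B c.j ∨ z ∈ c.X := by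
    intro z hz hzA hzF
    rcases c.part z with h | ⟨i, h⟩ | ⟨i, h⟩ | h | h | h
    · exact absurd h hzA
    · exact Or.inl ((by_contra fun hij => c.XB i hij w hw z h hz : i = c.j) ▸ h)
    · exact absurd hz (c.XC i w hw z h)
    · exact absurd h hzF
    · exact Or.inr h
    · exact absurd hz (c.XYa w hw z h)
  exact c.adjBjX (cls u h1 hAu hFu) (cls u' h2 hAu' hFu') hne

/-- Three non-neighbours of a vertex of `Y`, avoiding `A`, cannot form an induced `P₃`. -/
lemma elimY3 {w u1 u2 u3 : W} (hw : w ∈ c.Y) (hn1 : ¬ Q.Adj w u1) (hn2 : ¬ Q.Adj w u2)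
    (hn3 : ¬ Q.Adj w u3) (he1 : u1 ≠ w) (he2 : u2 ≠ w) (he3 : u3 ≠ w)
    (hA1 : u1 ∉ c.A) (hA2 : u2 ∉ c.A) (hA3 : u3 ∉ c.A)
    (a12 : Q.Adj u1 u2) (a23 : Q.Adj u2 u3) (ne13 : u1 ≠ u3) : Q.Adj u1 u3 := by
  have cls : ∀ z, ¬ Q.Adj w z → z ≠ w → z ∉ c.A → (∃ i, z ∈ c.B i) ∨ z ∈ c.X := by
    intro z hz hze hzA
    rcases c.nnY hw hze hz with h | h | h
    · exact absurd h hzA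
    · exact Or.inl h
    · exact Or.inr h
  exact c.noP3BX (cls u1 hn1 he1 hA1) (cls u2 hn2 he2 hA2) (cls u3 hn3 he3 hA3) a12 a23 ne13

lemma nestContra {i : Fin t} {b b' cc cc' : W} (hb : b ∈ c.B i) (hb' : b' ∈ c.B i)
    (hc : cc ∈ c.C i) (hc' : cc' ∈ c.C i) (h1 : Q.Adj b cc) (h2 : Q.Adj b' cc')
    (n1 : ¬ Q.Adj b cc') (n2 : ¬ Q.Adj b' cc) : False := by
  rcases c.nest i b hb b' hb' with h | h
  · exact n2 (SimpleGraph.mem_neighborSet _ _ _ |>.mp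
      (h ⟨(SimpleGraph.mem_neighborSet _ _ _).mpr h1, hc⟩).1)
  · exact n1 (SimpleGraph.mem_neighborSet _ _ _ |>.mp
      (h ⟨(SimpleGraph.mem_neighborSet _ _ _).mpr h2, hc'⟩).1)

/-- Among three vertices of `B ∪ C` forming an induced `P₃`, one lies in `C`. -/
lemma noBBB {u1 u2 u3 : W}
    (l1 : (∃ i, u1 ∈ c.B i) ∨ (∃ i, u1 ∈ c.C i))
    (l2 : (∃ i, u2 ∈ c.B i) ∨ (∃ i, u2 ∈ c.C i))
    (l3 : (∃ i, u3 ∈ c.B i) ∨ (∃ i, u3 ∈ c.C i))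
    (a12 : Q.Adj u1 u2) (a23 : Q.Adj u2 u3) (n13 : ¬ Q.Adj u1 u3) (ne13 : u1 ≠ u3) :
    (∃ i, u1 ∈ c.C i) ∨ (∃ i, u2 ∈ c.C i) ∨ (∃ i, u3 ∈ c.C i) := by
  rcases l1 with ⟨i, h1⟩ | h1
  · rcases l2 with ⟨k, h2⟩ | h2
    · rcases l3 with ⟨l, h3⟩ | h3
      · have e1 := c.bbEq h1 h2 a12
        have e2 := c.bbEq h2 h3 a23
        exact absurd (c.cB i h1 (show u3 ∈ c.B i by rw [e1, e2]; exact h3) ne13) n13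
      · exact Or.inr (Or.inr h3)
    · exact Or.inr (Or.inl h2)
  · exact Or.inl h1

/-- The key 4-cycle finisher: an induced `C₄` inside `B ∪ C` starting in `B` is impossible. -/
lemma finB {i : Fin t} {w0 w1 w2 w3 : W} (h0 : w0 ∈ c.B i)
    (l1 : (∃ k, w1 ∈ c.B k) ∨ (∃ k, w1 ∈ c.C k))
    (l2 : (∃ k, w2 ∈ c.B k) ∨ (∃ k, w2 ∈ c.C k))
    (l3 : (∃ k, w3 ∈ c.B k) ∨ (∃ k, w3 ∈ c.C k))
    (a01 : Q.Adj w0 w1) (a12 : Q.Adj w1 w2) (a23 : Q.Adj w2 w3) (a30 : Q.Adj w3 w0)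
    (n02 : ¬ Q.Adj w0 w2) (n13 : ¬ Q.Adj w1 w3)
    (ne02 : w0 ≠ w2) (ne13 : w1 ≠ w3) : False := by
  rcases l2 with ⟨k, h2⟩ | ⟨k, h2⟩
  · rcases l1 with ⟨m, h1⟩ | ⟨m, h1⟩
    · have e1 := c.bbEq h0 h1 a01
      have e2 := c.bbEq h1 h2 a12
      exact n02 (c.cB i h0 (show w2 ∈ c.B i by rw [e1, e2]; exact h2) ne02)
    · have e1 := c.bcEq h0 h1 a01
      have e2 := c.bcEq h2 h1 a12.symm
      exact n02 (c.cB i h0 (show w2 ∈ c.B i by rw [e1, ← e2]; exact h2) ne02)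
  · rcases l1 with ⟨m, h1⟩ | ⟨m, h1⟩ <;> rcases l3 with ⟨l, h3⟩ | ⟨l, h3⟩
    · have e1 := c.bbEq h0 h1 a01
      have e3 := c.bbEq h3 h0 a30
      exact n13 (c.cB i (show w1 ∈ c.B i by rw [e1]; exact h1)
        (show w3 ∈ c.B i by rw [← e3]; exact h3) ne13)
    · have e1 := c.bbEq h0 h1 a01
      have e2 := c.bcEq h1 h2 a12
      have e3 := c.bcEq h0 h3 a30.symm
      exact c.nestContra h0 (show w1 ∈ c.B i by rw [e1]; exact h1)
        (show w3 ∈ c.C i by rw [e3]; exact h3)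
        (show w2 ∈ c.C i by rw [e1, e2]; exact h2)
        a30.symm a12 n02 n13
    · have e1 := c.bcEq h0 h1 a01
      have e3 := c.bbEq h3 h0 a30
      have e2 := c.bcEq h3 h2 a23.symm
      exact c.nestContra h0 (show w3 ∈ c.B i by rw [← e3]; exact h3)
        (show w1 ∈ c.C i by rw [e1]; exact h1)
        (show w2 ∈ c.C i by rw [e3.symm.trans e2]; exact h2)
        a01 a23.symm n02 (fun hh => n13 hh.symm)
    · exact n13 (c.adjCY (Or.inl ⟨m, h1⟩) (Or.inl ⟨l, h3⟩) ne13)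

lemma noC4 : IndFree Q (cycleG 4) := by
  constructor
  intro f
  have adjf : ∀ a b : ZMod 4, a ≠ b ∧ (b = a + 1 ∨ a = b + 1) → Q.Adj (f a) (f b) :=
    fun a b h => f.map_adj_iff.mpr ((cycleG_adj a b).mpr h)
  have nadjf : ∀ a b : ZMod 4, ¬(a ≠ b ∧ (b = a + 1 ∨ a = b + 1)) → ¬ Q.Adj (f a) (f b) :=
    fun a b h hh => h ((cycleG_adj a b).mp (f.map_adj_iff.mp hh))
  have nef : ∀ a b : ZMod 4, a ≠ b → f a ≠ f b := fun a b h hh => h (f.injective hh)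
  have a01 := adjf 0 1 (by decide)
  have a12 := adjf 1 2 (by decide)
  have a23 := adjf 2 3 (by decide)
  have a30 := adjf 3 0 (by decide)
  have n02 := nadjf 0 2 (by decide)
  have n13 := nadjf 1 3 (by decide)
  have n20 := nadjf 2 0 (by decide)
  have n31 := nadjf 3 1 (by decide)
  have ne02 := nef 0 2 (by decide)
  have ne13 := nef 1 3 (by decide)
  have ne20 := nef 2 0 (by decide)
  have ne31 := nef 3 1 (by decide)
  -- step 1 : no vertex in A
  have noAat : ∀ w0 w1 w2 w3 : W, Q.Adj w0 w1 → Q.Adj w1 w2 → Q.Adj w2 w3 → Q.Adj w3 w0 →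
      ¬Q.Adj w0 w2 → ¬Q.Adj w1 w3 → w2 ≠ w0 → w1 ≠ w3 → w0 ∉ c.A := by
    intro w0 w1 w2 w3 a01 a12 a23 a30 n02 n13 ne20 ne13 h0A
    rcases c.nnA h0A ne20 n02 with ⟨i, h2C⟩ | h2Y
    · have cl1 : w1 ∈ c.B i ∨ w1 ∈ c.F := by
        rcases c.part w1 with h | ⟨k, h⟩ | ⟨k, h⟩ | h | h | h
        · exact absurd a12 (c.AC i w1 h w2 h2C)
        · exact Or.inl (show w1 ∈ c.B i by rw [← c.bcEq h h2C a12]; exact h)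
        · exact absurd a01 (c.AC k w0 h0A w1 h)
        · exact Or.inr h
        · exact absurd a12 (c.XC i w1 h w2 h2C)
        · exact absurd a01.symm (c.YA w1 h w0 h0A)
      have cl3 : w3 ∈ c.B i ∨ w3 ∈ c.F := by
        rcases c.part w3 with h | ⟨k, h⟩ | ⟨k, h⟩ | h | h | h
        · exact absurd a23.symm (c.AC i w3 h w2 h2C)
        · exact Or.inl (show w3 ∈ c.B i by rw [← c.bcEq h h2C a23.symm]; exact h)
        · exact absurd a30.symm (c.AC k w0 h0A w3 h)
        · exact Or.inr h
        · exact absurd a23.symm (c.XC i w3 h w2 h2C)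
        · exact absurd a30 (c.YA w3 h w0 h0A)
      rcases cl1 with h1 | h1 <;> rcases cl3 with h3 | h3
      · exact n13 (c.cB i h1 h3 ne13)
      · have hij : i ≠ c.j := fun he => c.FCj w3 h3 w2 (show w2 ∈ c.C c.j by rw [← he]; exact h2C) a23.symm
        exact n13 ((c.FB i hij w3 h3 w1 h1).symm)
      · have hij : i ≠ c.j := fun he => c.FCj w1 h1 w2 (show w2 ∈ c.C c.j by rw [← he]; exact h2C) a12
        exact n13 (c.FB i hij w1 h1 w3 h3)
      · exact n13 (c.cF h1 h3 ne13)
    · have cl1 : w1 ∈ c.F := by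
        rcases c.part w1 with h | ⟨k, h⟩ | ⟨k, h⟩ | h | h | h
        · exact absurd a12.symm (c.YA w2 h2Y w1 h)
        · exact absurd a12.symm (c.YB k w2 h2Y w1 h)
        · exact absurd a01 (c.AC k w0 h0A w1 h)
        · exact h
        · exact absurd a12 (c.XYa w1 h w2 h2Y)
        · exact absurd a01.symm (c.YA w1 h w0 h0A)
      have cl3 : w3 ∈ c.F := by
        rcases c.part w3 with h | ⟨k, h⟩ | ⟨k, h⟩ | h | h | h
        · exact absurd a23 (c.YA w2 h2Y w3 h)
        · exact absurd a23 (c.YB k w2 h2Y w3 h)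
        · exact absurd a30.symm (c.AC k w0 h0A w3 h)
        · exact h
        · exact absurd a23.symm (c.XYa w3 h w2 h2Y)
        · exact absurd a30 (c.YA w3 h w0 h0A)
      exact n13 (c.cF cl1 cl3 ne13)
  have h0A := noAat (f 0) (f 1) (f 2) (f 3) a01 a12 a23 a30 n02 n13 ne20 ne13
  have h1A := noAat (f 1) (f 2) (f 3) (f 0) a12 a23 a30 a01 n13 n20 ne31 ne20
  have h2A := noAat (f 2) (f 3) (f 0) (f 1) a23 a30 a01 a12 n20 n31 ne02 ne31
  have h3A := noAat (f 3) (f 0) (f 1) (f 2) a30 a01 a12 a23 n31 n02 ne13 ne02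
  -- step 2 : no vertex in F
  have noFat : ∀ w0 w1 w2 w3 : W, Q.Adj w0 w1 → Q.Adj w1 w2 → Q.Adj w2 w3 → Q.Adj w3 w0 →
      ¬Q.Adj w0 w2 → ¬Q.Adj w1 w3 → w2 ≠ w0 → w1 ≠ w3 → w1 ∉ c.A → w3 ∉ c.A → w0 ∉ c.F := by
    intro w0 w1 w2 w3 a01 a12 a23 a30 n02 n13 ne20 ne13 h1A h3A h0F
    rcases c.nnF h0F ne20 n02 with h2B | h2C
    · have cl1 : w1 ∈ c.X := by
        rcases c.part w1 with h | ⟨k, h⟩ | ⟨k, h⟩ | h | h | h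
        · exact absurd h h1A
        · exact absurd a01 (c.FBj w0 h0F w1 (show w1 ∈ c.B c.j by rw [← c.bbEq h h2B a12]; exact h))
        · exact absurd a01 (c.FCj w0 h0F w1 (show w1 ∈ c.C c.j by rw [c.bcEq h2B h a12.symm]; exact h))
        · exact absurd a12 (c.FBj w1 h w2 h2B)
        · exact h
        · exact absurd a12 (c.YB c.j w1 h w2 h2B)
      have cl3 : w3 ∈ c.X := by
        rcases c.part w3 with h | ⟨k, h⟩ | ⟨k, h⟩ | h | h | h
        · exact absurd h h3A
        · exact absurd a30.symm (c.FBj w0 h0F w3 (show w3 ∈ c.B c.j by rw [← c.bbEq h h2B a23.symm]; exact h))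
        · exact absurd a30.symm (c.FCj w0 h0F w3 (show w3 ∈ c.C c.j by rw [c.bcEq h2B h a23]; exact h))
        · exact absurd a23.symm (c.FBj w3 h w2 h2B)
        · exact h
        · exact absurd a23.symm (c.YB c.j w3 h w2 h2B)
      exact n13 (c.cX cl1 cl3 ne13)
    · have cl1 : (∃ k, w1 ∈ c.C k) ∨ w1 ∈ c.Y := by
        rcases c.part w1 with h | ⟨k, h⟩ | ⟨k, h⟩ | h | h | h
        · exact absurd h h1A
        · exact absurd a01 (c.FBj w0 h0F w1 (show w1 ∈ c.B c.j by rw [← c.bcEq h h2C a12]; exact h))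
        · exact Or.inl ⟨k, h⟩
        · exact absurd a12 (c.FCj w1 h w2 h2C)
        · exact absurd a12 (c.XC c.j w1 h w2 h2C)
        · exact Or.inr h
      have cl3 : (∃ k, w3 ∈ c.C k) ∨ w3 ∈ c.Y := by
        rcases c.part w3 with h | ⟨k, h⟩ | ⟨k, h⟩ | h | h | h
        · exact absurd h h3A
        · exact absurd a30.symm (c.FBj w0 h0F w3 (show w3 ∈ c.B c.j by rw [← c.bcEq h h2C a23.symm]; exact h))
        · exact Or.inl ⟨k, h⟩
        · exact absurd a23.symm (c.FCj w3 h w2 h2C)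
        · exact absurd a23.symm (c.XC c.j w3 h w2 h2C)
        · exact Or.inr h
      exact n13 (c.adjCY cl1 cl3 ne13)
  have h0F := noFat (f 0) (f 1) (f 2) (f 3) a01 a12 a23 a30 n02 n13 ne20 ne13 h1A h3A
  have h1F := noFat (f 1) (f 2) (f 3) (f 0) a12 a23 a30 a01 n13 n20 ne31 ne20 h2A h0A
  have h2F := noFat (f 2) (f 3) (f 0) (f 1) a23 a30 a01 a12 n20 n31 ne02 ne31 h3A h1A
  have h3F := noFat (f 3) (f 0) (f 1) (f 2) a30 a01 a12 a23 n31 n02 ne13 ne02 h0A h2A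
  -- step 3 : no vertex in Y, no vertex in X
  have h0Y : f 0 ∉ c.Y := fun h => n13 (c.elimYnbr h a01 a30.symm h1F h3F ne13)
  have h1Y : f 1 ∉ c.Y := fun h => n20 (c.elimYnbr h a12 a01.symm h2F h0F ne20)
  have h2Y : f 2 ∉ c.Y := fun h => n31 (c.elimYnbr h a23 a12.symm h3F h1F ne31)
  have h3Y : f 3 ∉ c.Y := fun h => n02 (c.elimYnbr h a30 a23.symm h0F h2F ne02)
  have h0X : f 0 ∉ c.X := fun h => n13 (c.elimXnbr h a01 a30.symm h1A h1F h3A h3F ne13)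
  have h1X : f 1 ∉ c.X := fun h => n20 (c.elimXnbr h a12 a01.symm h2A h2F h0A h0F ne20)
  have h2X : f 2 ∉ c.X := fun h => n31 (c.elimXnbr h a23 a12.symm h3A h3F h1A h1F ne31)
  have h3X : f 3 ∉ c.X := fun h => n02 (c.elimXnbr h a30 a23.symm h0A h0F h2A h2F ne02)
  -- step 4 : everything is in B ∪ C
  have loc : ∀ a : ZMod 4, f a ∉ c.A → f a ∉ c.F → f a ∉ c.X → f a ∉ c.Y →
      (∃ k, f a ∈ c.B k) ∨ (∃ k, f a ∈ c.C k) := by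
    intro a hA hF hX hY
    rcases c.part (f a) with h | ⟨k, h⟩ | ⟨k, h⟩ | h | h | h
    · exact absurd h hA
    · exact Or.inl ⟨k, h⟩
    · exact Or.inr ⟨k, h⟩
    · exact absurd h hF
    · exact absurd h hX
    · exact absurd h hY
  have l0 := loc 0 h0A h0F h0X h0Y
  have l1 := loc 1 h1A h1F h1X h1Y
  have l2 := loc 2 h2A h2F h2X h2Y
  have l3 := loc 3 h3A h3F h3X h3Y
  rcases l0 with ⟨i, h0⟩ | h0
  · exact c.finB h0 l1 l2 l3 a01 a12 a23 a30 n02 n13 ne02 ne13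
  · rcases l1 with ⟨i, h1⟩ | h1
    · exact c.finB h1 l2 l3 (Or.inr h0) a12 a23 a30 a01 n13 n20 ne13 ne20
    · rcases l2 with ⟨i, h2⟩ | h2
      · exact c.finB h2 l3 (Or.inr h0) (Or.inr h1) a23 a30 a01 a12 n20 n31 ne20 ne31
      · exact n02 (c.adjCY (Or.inl h0) (Or.inl h2) ne02)

lemma noC6 : IndFree Q (cycleG 6) := by
  constructor
  intro f
  have adjf : ∀ a b : ZMod 6, a ≠ b ∧ (b = a + 1 ∨ a = b + 1) → Q.Adj (f a) (f b) :=
    fun a b h => f.map_adj_iff.mpr ((cycleG_adj a b).mpr h)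
  have nadjf : ∀ a b : ZMod 6, ¬(a ≠ b ∧ (b = a + 1 ∨ a = b + 1)) → ¬ Q.Adj (f a) (f b) :=
    fun a b h hh => h ((cycleG_adj a b).mp (f.map_adj_iff.mp hh))
  have nef : ∀ a b : ZMod 6, a ≠ b → f a ≠ f b := fun a b h hh => h (f.injective hh)
  have a01 := adjf 0 1 (by decide)
  have a12 := adjf 1 2 (by decide)
  have a23 := adjf 2 3 (by decide)
  have a34 := adjf 3 4 (by decide)
  have a45 := adjf 4 5 (by decide)
  have a50 := adjf 5 0 (by decide)
  have n02 := nadjf 0 2 (by decide)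
  have n03 := nadjf 0 3 (by decide)
  have n04 := nadjf 0 4 (by decide)
  have n13 := nadjf 1 3 (by decide)
  have n14 := nadjf 1 4 (by decide)
  have n15 := nadjf 1 5 (by decide)
  have n24 := nadjf 2 4 (by decide)
  have n25 := nadjf 2 5 (by decide)
  have n35 := nadjf 3 5 (by decide)
  have n20 := nadjf 2 0 (by decide)
  have n30 := nadjf 3 0 (by decide)
  have n40 := nadjf 4 0 (by decide)
  have n31 := nadjf 3 1 (by decide)
  have n41 := nadjf 4 1 (by decide)
  have n51 := nadjf 5 1 (by decide)
  have n42 := nadjf 4 2 (by decide)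
  have n52 := nadjf 5 2 (by decide)
  have n53 := nadjf 5 3 (by decide)
  have ne02 := nef 0 2 (by decide)
  have ne03 := nef 0 3 (by decide)
  have ne04 := nef 0 4 (by decide)
  have ne13 := nef 1 3 (by decide)
  have ne14 := nef 1 4 (by decide)
  have ne15 := nef 1 5 (by decide)
  have ne24 := nef 2 4 (by decide)
  have ne25 := nef 2 5 (by decide)
  have ne35 := nef 3 5 (by decide)
  have ne20 := nef 2 0 (by decide)
  have ne30 := nef 3 0 (by decide)
  have ne40 := nef 4 0 (by decide)
  have ne31 := nef 3 1 (by decide)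
  have ne41 := nef 4 1 (by decide)
  have ne51 := nef 5 1 (by decide)
  have ne42 := nef 4 2 (by decide)
  have ne52 := nef 5 2 (by decide)
  have ne53 := nef 5 3 (by decide)
  have e0 : f 0 ∈ c.A ∨ f 0 ∈ c.F → False := fun h => n24 (c.elimPair h n02 n04 ne20 ne40 ne24)
  have e1 : f 1 ∈ c.A ∨ f 1 ∈ c.F → False := fun h => n35 (c.elimPair h n13 n15 ne31 ne51 ne35)
  have e2 : f 2 ∈ c.A ∨ f 2 ∈ c.F → False := fun h => n40 (c.elimPair h n24 n20 ne42 ne02 ne40)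
  have e3 : f 3 ∈ c.A ∨ f 3 ∈ c.F → False := fun h => n51 (c.elimPair h n35 n31 ne53 ne13 ne51)
  have e4 : f 4 ∈ c.A ∨ f 4 ∈ c.F → False := fun h => n02 (c.elimPair h n40 n42 ne04 ne24 ne02)
  have e5 : f 5 ∈ c.A ∨ f 5 ∈ c.F → False := fun h => n13 (c.elimPair h n51 n53 ne15 ne35 ne13)
  have hA0 : f 0 ∉ c.A := fun h => e0 (Or.inl h)
  have hA1 : f 1 ∉ c.A := fun h => e1 (Or.inl h)
  have hA2 : f 2 ∉ c.A := fun h => e2 (Or.inl h)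
  have hA3 : f 3 ∉ c.A := fun h => e3 (Or.inl h)
  have hA4 : f 4 ∉ c.A := fun h => e4 (Or.inl h)
  have hA5 : f 5 ∉ c.A := fun h => e5 (Or.inl h)
  have hF0 : f 0 ∉ c.F := fun h => e0 (Or.inr h)
  have hF1 : f 1 ∉ c.F := fun h => e1 (Or.inr h)
  have hF2 : f 2 ∉ c.F := fun h => e2 (Or.inr h)
  have hF3 : f 3 ∉ c.F := fun h => e3 (Or.inr h)
  have hF4 : f 4 ∉ c.F := fun h => e4 (Or.inr h)
  have hF5 : f 5 ∉ c.F := fun h => e5 (Or.inr h)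
  have y0 : f 0 ∉ c.Y := fun h => n24 (c.elimY3 h n02 n03 n04 ne20 ne30 ne40 hA2 hA3 hA4 a23 a34 ne24)
  have y1 : f 1 ∉ c.Y := fun h => n35 (c.elimY3 h n13 n14 n15 ne31 ne41 ne51 hA3 hA4 hA5 a34 a45 ne35)
  have y2 : f 2 ∉ c.Y := fun h => n40 (c.elimY3 h n24 n25 n20 ne42 ne52 ne02 hA4 hA5 hA0 a45 a50 ne40)
  have y3 : f 3 ∉ c.Y := fun h => n51 (c.elimY3 h n35 n30 n31 ne53 ne03 ne13 hA5 hA0 hA1 a50 a01 ne51)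
  have y4 : f 4 ∉ c.Y := fun h => n02 (c.elimY3 h n40 n41 n42 ne04 ne14 ne24 hA0 hA1 hA2 a01 a12 ne02)
  have y5 : f 5 ∉ c.Y := fun h => n13 (c.elimY3 h n51 n52 n53 ne15 ne25 ne35 hA1 hA2 hA3 a12 a23 ne13)
  have x0 : f 0 ∉ c.X := fun h => n15 (c.elimXnbr h a01 a50.symm hA1 hF1 hA5 hF5 ne15)
  have x1 : f 1 ∉ c.X := fun h => n20 (c.elimXnbr h a12 a01.symm hA2 hF2 hA0 hF0 ne20)
  have x2 : f 2 ∉ c.X := fun h => n31 (c.elimXnbr h a23 a12.symm hA3 hF3 hA1 hF1 ne31)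
  have x3 : f 3 ∉ c.X := fun h => n42 (c.elimXnbr h a34 a23.symm hA4 hF4 hA2 hF2 ne42)
  have x4 : f 4 ∉ c.X := fun h => n53 (c.elimXnbr h a45 a34.symm hA5 hF5 hA3 hF3 ne53)
  have x5 : f 5 ∉ c.X := fun h => n04 (c.elimXnbr h a50 a45.symm hA0 hF0 hA4 hF4 ne04)
  have loc : ∀ a : ZMod 6, f a ∉ c.A → f a ∉ c.F → f a ∉ c.X → f a ∉ c.Y →
      (∃ k, f a ∈ c.B k) ∨ (∃ k, f a ∈ c.C k) := by
    intro a hA hF hX hY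
    rcases c.part (f a) with h | ⟨k, h⟩ | ⟨k, h⟩ | h | h | h
    · exact absurd h hA
    · exact Or.inl ⟨k, h⟩
    · exact Or.inr ⟨k, h⟩
    · exact absurd h hF
    · exact absurd h hX
    · exact absurd h hY
  have l0 := loc 0 hA0 hF0 x0 y0
  have l1 := loc 1 hA1 hF1 x1 y1
  have l2 := loc 2 hA2 hF2 x2 y2
  have l3 := loc 3 hA3 hF3 x3 y3
  have l4 := loc 4 hA4 hF4 x4 y4
  have l5 := loc 5 hA5 hF5 x5 y5
  rcases c.noBBB l0 l1 l2 a01 a12 n02 ne02 with h | h | h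
  · rcases c.noBBB l2 l3 l4 a23 a34 n24 ne24 with h' | h' | h'
    · exact n02 (c.adjCY (Or.inl h) (Or.inl h') ne02)
    · exact n03 (c.adjCY (Or.inl h) (Or.inl h') ne03)
    · exact n04 (c.adjCY (Or.inl h) (Or.inl h') ne04)
  · rcases c.noBBB l3 l4 l5 a34 a45 n35 ne35 with h' | h' | h'
    · exact n13 (c.adjCY (Or.inl h) (Or.inl h') ne13)
    · exact n14 (c.adjCY (Or.inl h) (Or.inl h') ne14)
    · exact n15 (c.adjCY (Or.inl h) (Or.inl h') ne15)
  · rcases c.noBBB l4 l5 l0 a45 a50 n40 ne40 with h' | h' | h'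
    · exact n24 (c.adjCY (Or.inl h) (Or.inl h') ne24)
    · exact n25 (c.adjCY (Or.inl h) (Or.inl h') ne25)
    · exact n20 (c.adjCY (Or.inl h) (Or.inl h') ne20)

lemma noC7 : IndFree Q (cycleG 7) := by
  constructor
  intro f
  have adjf : ∀ a b : ZMod 7, a ≠ b ∧ (b = a + 1 ∨ a = b + 1) → Q.Adj (f a) (f b) :=
    fun a b h => f.map_adj_iff.mpr ((cycleG_adj a b).mpr h)
  have nadjf : ∀ a b : ZMod 7, ¬(a ≠ b ∧ (b = a + 1 ∨ a = b + 1)) → ¬ Q.Adj (f a) (f b) :=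
    fun a b h hh => h ((cycleG_adj a b).mp (f.map_adj_iff.mp hh))
  have nef : ∀ a b : ZMod 7, a ≠ b → f a ≠ f b := fun a b h hh => h (f.injective hh)
  have a01 := adjf 0 1 (by decide)
  have a12 := adjf 1 2 (by decide)
  have a23 := adjf 2 3 (by decide)
  have a34 := adjf 3 4 (by decide)
  have a45 := adjf 4 5 (by decide)
  have a56 := adjf 5 6 (by decide)
  have a60 := adjf 6 0 (by decide)
  have n02 := nadjf 0 2 (by decide)
  have n03 := nadjf 0 3 (by decide)
  have n04 := nadjf 0 4 (by decide)
  have n05 := nadjf 0 5 (by decide)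
  have n13 := nadjf 1 3 (by decide)
  have n14 := nadjf 1 4 (by decide)
  have n15 := nadjf 1 5 (by decide)
  have n16 := nadjf 1 6 (by decide)
  have n24 := nadjf 2 4 (by decide)
  have n25 := nadjf 2 5 (by decide)
  have n26 := nadjf 2 6 (by decide)
  have n35 := nadjf 3 5 (by decide)
  have n36 := nadjf 3 6 (by decide)
  have n46 := nadjf 4 6 (by decide)
  have n20 := nadjf 2 0 (by decide)
  have n30 := nadjf 3 0 (by decide)
  have n40 := nadjf 4 0 (by decide)
  have n50 := nadjf 5 0 (by decide)
  have n31 := nadjf 3 1 (by decide)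
  have n41 := nadjf 4 1 (by decide)
  have n51 := nadjf 5 1 (by decide)
  have n61 := nadjf 6 1 (by decide)
  have n42 := nadjf 4 2 (by decide)
  have n52 := nadjf 5 2 (by decide)
  have n62 := nadjf 6 2 (by decide)
  have n53 := nadjf 5 3 (by decide)
  have n63 := nadjf 6 3 (by decide)
  have n64 := nadjf 6 4 (by decide)
  have ne02 := nef 0 2 (by decide)
  have ne03 := nef 0 3 (by decide)
  have ne04 := nef 0 4 (by decide)
  have ne05 := nef 0 5 (by decide)
  have ne13 := nef 1 3 (by decide)
  have ne14 := nef 1 4 (by decide)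
  have ne15 := nef 1 5 (by decide)
  have ne16 := nef 1 6 (by decide)
  have ne24 := nef 2 4 (by decide)
  have ne25 := nef 2 5 (by decide)
  have ne26 := nef 2 6 (by decide)
  have ne35 := nef 3 5 (by decide)
  have ne36 := nef 3 6 (by decide)
  have ne46 := nef 4 6 (by decide)
  have ne20 := nef 2 0 (by decide)
  have ne30 := nef 3 0 (by decide)
  have ne40 := nef 4 0 (by decide)
  have ne50 := nef 5 0 (by decide)
  have ne31 := nef 3 1 (by decide)
  have ne41 := nef 4 1 (by decide)
  have ne51 := nef 5 1 (by decide)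
  have ne61 := nef 6 1 (by decide)
  have ne42 := nef 4 2 (by decide)
  have ne52 := nef 5 2 (by decide)
  have ne62 := nef 6 2 (by decide)
  have ne53 := nef 5 3 (by decide)
  have ne63 := nef 6 3 (by decide)
  have ne64 := nef 6 4 (by decide)
  have e0 : f 0 ∈ c.A ∨ f 0 ∈ c.F → False := fun h => n24 (c.elimPair h n02 n04 ne20 ne40 ne24)
  have e1 : f 1 ∈ c.A ∨ f 1 ∈ c.F → False := fun h => n35 (c.elimPair h n13 n15 ne31 ne51 ne35)
  have e2 : f 2 ∈ c.A ∨ f 2 ∈ c.F → False := fun h => n46 (c.elimPair h n24 n26 ne42 ne62 ne46)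
  have e3 : f 3 ∈ c.A ∨ f 3 ∈ c.F → False := fun h => n50 (c.elimPair h n35 n30 ne53 ne03 ne50)
  have e4 : f 4 ∈ c.A ∨ f 4 ∈ c.F → False := fun h => n61 (c.elimPair h n46 n41 ne64 ne14 ne61)
  have e5 : f 5 ∈ c.A ∨ f 5 ∈ c.F → False := fun h => n02 (c.elimPair h n50 n52 ne05 ne25 ne02)
  have e6 : f 6 ∈ c.A ∨ f 6 ∈ c.F → False := fun h => n13 (c.elimPair h n61 n63 ne16 ne36 ne13)
  have hA0 : f 0 ∉ c.A := fun h => e0 (Or.inl h)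
  have hA1 : f 1 ∉ c.A := fun h => e1 (Or.inl h)
  have hA2 : f 2 ∉ c.A := fun h => e2 (Or.inl h)
  have hA3 : f 3 ∉ c.A := fun h => e3 (Or.inl h)
  have hA4 : f 4 ∉ c.A := fun h => e4 (Or.inl h)
  have hA5 : f 5 ∉ c.A := fun h => e5 (Or.inl h)
  have hA6 : f 6 ∉ c.A := fun h => e6 (Or.inl h)
  have hF0 : f 0 ∉ c.F := fun h => e0 (Or.inr h)
  have hF1 : f 1 ∉ c.F := fun h => e1 (Or.inr h)
  have hF2 : f 2 ∉ c.F := fun h => e2 (Or.inr h)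
  have hF3 : f 3 ∉ c.F := fun h => e3 (Or.inr h)
  have hF4 : f 4 ∉ c.F := fun h => e4 (Or.inr h)
  have hF5 : f 5 ∉ c.F := fun h => e5 (Or.inr h)
  have hF6 : f 6 ∉ c.F := fun h => e6 (Or.inr h)
  have y0 : f 0 ∉ c.Y := fun h => n24 (c.elimY3 h n02 n03 n04 ne20 ne30 ne40 hA2 hA3 hA4 a23 a34 ne24)
  have y1 : f 1 ∉ c.Y := fun h => n35 (c.elimY3 h n13 n14 n15 ne31 ne41 ne51 hA3 hA4 hA5 a34 a45 ne35)
  have y2 : f 2 ∉ c.Y := fun h => n46 (c.elimY3 h n24 n25 n26 ne42 ne52 ne62 hA4 hA5 hA6 a45 a56 ne46)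
  have y3 : f 3 ∉ c.Y := fun h => n50 (c.elimY3 h n35 n36 n30 ne53 ne63 ne03 hA5 hA6 hA0 a56 a60 ne50)
  have y4 : f 4 ∉ c.Y := fun h => n61 (c.elimY3 h n46 n40 n41 ne64 ne04 ne14 hA6 hA0 hA1 a60 a01 ne61)
  have y5 : f 5 ∉ c.Y := fun h => n02 (c.elimY3 h n50 n51 n52 ne05 ne15 ne25 hA0 hA1 hA2 a01 a12 ne02)
  have y6 : f 6 ∉ c.Y := fun h => n13 (c.elimY3 h n61 n62 n63 ne16 ne26 ne36 hA1 hA2 hA3 a12 a23 ne13)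
  have x0 : f 0 ∉ c.X := fun h => n16 (c.elimXnbr h a01 a60.symm hA1 hF1 hA6 hF6 ne16)
  have x1 : f 1 ∉ c.X := fun h => n20 (c.elimXnbr h a12 a01.symm hA2 hF2 hA0 hF0 ne20)
  have x2 : f 2 ∉ c.X := fun h => n31 (c.elimXnbr h a23 a12.symm hA3 hF3 hA1 hF1 ne31)
  have x3 : f 3 ∉ c.X := fun h => n42 (c.elimXnbr h a34 a23.symm hA4 hF4 hA2 hF2 ne42)
  have x4 : f 4 ∉ c.X := fun h => n53 (c.elimXnbr h a45 a34.symm hA5 hF5 hA3 hF3 ne53)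
  have x5 : f 5 ∉ c.X := fun h => n64 (c.elimXnbr h a56 a45.symm hA6 hF6 hA4 hF4 ne64)
  have x6 : f 6 ∉ c.X := fun h => n05 (c.elimXnbr h a60 a56.symm hA0 hF0 hA5 hF5 ne05)
  have loc : ∀ a : ZMod 7, f a ∉ c.A → f a ∉ c.F → f a ∉ c.X → f a ∉ c.Y →
      (∃ k, f a ∈ c.B k) ∨ (∃ k, f a ∈ c.C k) := by
    intro a hA hF hX hY
    rcases c.part (f a) with h | ⟨k, h⟩ | ⟨k, h⟩ | h | h | h
    · exact absurd h hA
    · exact Or.inl ⟨k, h⟩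
    · exact Or.inr ⟨k, h⟩
    · exact absurd h hF
    · exact absurd h hX
    · exact absurd h hY
  have l0 := loc 0 hA0 hF0 x0 y0
  have l1 := loc 1 hA1 hF1 x1 y1
  have l2 := loc 2 hA2 hF2 x2 y2
  have l3 := loc 3 hA3 hF3 x3 y3
  have l4 := loc 4 hA4 hF4 x4 y4
  have l5 := loc 5 hA5 hF5 x5 y5
  rcases c.noBBB l0 l1 l2 a01 a12 n02 ne02 with h | h | h
  · rcases c.noBBB l2 l3 l4 a23 a34 n24 ne24 with h' | h' | h'
    · exact n02 (c.adjCY (Or.inl h) (Or.inl h') ne02)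
    · exact n03 (c.adjCY (Or.inl h) (Or.inl h') ne03)
    · exact n04 (c.adjCY (Or.inl h) (Or.inl h') ne04)
  · rcases c.noBBB l3 l4 l5 a34 a45 n35 ne35 with h' | h' | h'
    · exact n13 (c.adjCY (Or.inl h) (Or.inl h') ne13)
    · exact n14 (c.adjCY (Or.inl h) (Or.inl h') ne14)
    · exact n15 (c.adjCY (Or.inl h) (Or.inl h') ne15)
  · rcases c.noBBB l4 l5 (loc 6 hA6 hF6 x6 y6) a45 a56 n46 ne46 with h' | h' | h'
    · exact n24 (c.adjCY (Or.inl h) (Or.inl h') ne24)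
    · exact n25 (c.adjCY (Or.inl h) (Or.inl h') ne25)
    · exact n26 (c.adjCY (Or.inl h) (Or.inl h') ne26)

lemma no2P3 : IndFree Q twoP3 := by
  constructor
  intro f
  have adjf : ∀ a b : Fin 3 ⊕ Fin 3, twoP3.Adj a b → Q.Adj (f a) (f b) :=
    fun a b h => f.map_adj_iff.mpr h
  have nadjf : ∀ a b : Fin 3 ⊕ Fin 3, ¬ twoP3.Adj a b → ¬ Q.Adj (f a) (f b) :=
    fun a b h hh => h (f.map_adj_iff.mp hh)
  have nef : ∀ a b : Fin 3 ⊕ Fin 3, a ≠ b → f a ≠ f b := fun a b h hh => h (f.injective hh)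
  have ap12 := adjf (Sum.inl 0) (Sum.inl 1) (by simp [twoP3, SimpleGraph.fromRel_adj, SimpleGraph.pathGraph_adj])
  have ap23 := adjf (Sum.inl 1) (Sum.inl 2) (by simp [twoP3, SimpleGraph.fromRel_adj, SimpleGraph.pathGraph_adj])
  have np13 := nadjf (Sum.inl 0) (Sum.inl 2) (by simp [twoP3, SimpleGraph.fromRel_adj, SimpleGraph.pathGraph_adj])
  have aq12 := adjf (Sum.inr 0) (Sum.inr 1) (by simp [twoP3, SimpleGraph.fromRel_adj, SimpleGraph.pathGraph_adj])
  have aq23 := adjf (Sum.inr 1) (Sum.inr 2) (by simp [twoP3, SimpleGraph.fromRel_adj, SimpleGraph.pathGraph_adj])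
  have nq13 := nadjf (Sum.inr 0) (Sum.inr 2) (by simp [twoP3, SimpleGraph.fromRel_adj, SimpleGraph.pathGraph_adj])
  have cross : ∀ a b : Fin 3, ¬ Q.Adj (f (Sum.inl a)) (f (Sum.inr b)) :=
    fun a b => nadjf _ _ (by simp [twoP3, SimpleGraph.fromRel_adj])
  have necross : ∀ a b : Fin 3, f (Sum.inl a) ≠ f (Sum.inr b) :=
    fun a b => nef _ _ (by simp)
  have nep13 := nef (Sum.inl 0) (Sum.inl 2) (by simp)
  have neq13 := nef (Sum.inr 0) (Sum.inr 2) (by simp)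
  -- no vertex lies in A ∪ F
  have eP : ∀ a : Fin 3, f (Sum.inl a) ∈ c.A ∨ f (Sum.inl a) ∈ c.F → False := fun a h =>
    nq13 (c.elimPair h (cross a 0) (cross a 2) (necross a 0).symm (necross a 2).symm neq13)
  have eQ : ∀ b : Fin 3, f (Sum.inr b) ∈ c.A ∨ f (Sum.inr b) ∈ c.F → False := fun b h =>
    np13 (c.elimPair h (fun hh => cross 0 b hh.symm) (fun hh => cross 2 b hh.symm)
      (necross 0 b) (necross 2 b) nep13)
  -- no vertex lies in Y
  have yP : ∀ a : Fin 3, f (Sum.inl a) ∉ c.Y := fun a h =>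
    nq13 (c.elimY3 h (cross a 0) (cross a 1) (cross a 2)
      (necross a 0).symm (necross a 1).symm (necross a 2).symm
      (fun hh => eQ 0 (Or.inl hh)) (fun hh => eQ 1 (Or.inl hh)) (fun hh => eQ 2 (Or.inl hh))
      aq12 aq23 neq13)
  have yQ : ∀ b : Fin 3, f (Sum.inr b) ∉ c.Y := fun b h =>
    np13 (c.elimY3 h (fun hh => cross 0 b hh.symm) (fun hh => cross 1 b hh.symm)
      (fun hh => cross 2 b hh.symm) (necross 0 b) (necross 1 b) (necross 2 b)
      (fun hh => eP 0 (Or.inl hh)) (fun hh => eP 1 (Or.inl hh)) (fun hh => eP 2 (Or.inl hh))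
      ap12 ap23 nep13)
  have locP : ∀ a : Fin 3, ((∃ k, f (Sum.inl a) ∈ c.B k) ∨ f (Sum.inl a) ∈ c.X) ∨
      (∃ k, f (Sum.inl a) ∈ c.C k) := by
    intro a
    rcases c.part (f (Sum.inl a)) with h | ⟨k, h⟩ | ⟨k, h⟩ | h | h | h
    · exact absurd (Or.inl h) (eP a)
    · exact Or.inl (Or.inl ⟨k, h⟩)
    · exact Or.inr ⟨k, h⟩
    · exact absurd (Or.inr h) (eP a)
    · exact Or.inl (Or.inr h)
    · exact absurd h (yP a)
  have locQ : ∀ b : Fin 3, ((∃ k, f (Sum.inr b) ∈ c.B k) ∨ f (Sum.inr b) ∈ c.X) ∨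
      (∃ k, f (Sum.inr b) ∈ c.C k) := by
    intro b
    rcases c.part (f (Sum.inr b)) with h | ⟨k, h⟩ | ⟨k, h⟩ | h | h | h
    · exact absurd (Or.inl h) (eQ b)
    · exact Or.inl (Or.inl ⟨k, h⟩)
    · exact Or.inr ⟨k, h⟩
    · exact absurd (Or.inr h) (eQ b)
    · exact Or.inl (Or.inr h)
    · exact absurd h (yQ b)
  have hpC : ∃ a : Fin 3, ∃ k, f (Sum.inl a) ∈ c.C k := by
    rcases locP 0 with h1 | h1
    · rcases locP 1 with h2 | h2
      · rcases locP 2 with h3 | h3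
        · exact absurd (c.noP3BX h1 h2 h3 ap12 ap23 nep13) np13
        · exact ⟨2, h3⟩
      · exact ⟨1, h2⟩
    · exact ⟨0, h1⟩
  have hqC : ∃ b : Fin 3, ∃ k, f (Sum.inr b) ∈ c.C k := by
    rcases locQ 0 with h1 | h1
    · rcases locQ 1 with h2 | h2
      · rcases locQ 2 with h3 | h3
        · exact absurd (c.noP3BX h1 h2 h3 aq12 aq23 neq13) nq13
        · exact ⟨2, h3⟩
      · exact ⟨1, h2⟩
    · exact ⟨0, h1⟩
  obtain ⟨a, ha⟩ := hpC
  obtain ⟨b, hb⟩ := hqC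
  exact cross a b (c.adjCY (Or.inl ha) (Or.inl hb) (necross a b))

/-- A vertex having three pairwise nonadjacent neighbours lies in `A ∪ F`. -/
lemma indep3 {v n1 n2 n3 : W} (h1 : Q.Adj v n1) (h2 : Q.Adj v n2) (h3 : Q.Adj v n3)
    (n12 : ¬ Q.Adj n1 n2) (n13 : ¬ Q.Adj n1 n3) (n23 : ¬ Q.Adj n2 n3)
    (e12 : n1 ≠ n2) (e13 : n1 ≠ n3) (e23 : n2 ≠ n3) : v ∈ c.A ∨ v ∈ c.F := by
  rcases c.part v with h | ⟨i, hv⟩ | ⟨i, hv⟩ | h | h | h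
  · exact Or.inl h
  · exfalso
    have cls : ∀ z, Q.Adj v z → (z ∈ c.A ∨ z ∈ c.F ∨ z ∈ c.X) ∨ z ∈ c.B i ∨ z ∈ c.C i := by
      intro z hz
      rcases c.part z with h | ⟨k, h⟩ | ⟨k, h⟩ | h | h | h
      · exact Or.inl (Or.inl h)
      · exact Or.inr (Or.inl (show z ∈ c.B i by rw [c.bbEq hv h hz]; exact h))
      · exact Or.inr (Or.inr (show z ∈ c.C i by rw [c.bcEq hv h hz]; exact h))
      · exact Or.inl (Or.inr (Or.inl h))
      · exact Or.inl (Or.inr (Or.inr h))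
      · exact absurd hz.symm (c.YB i z h v hv)
    have crossB : ∀ z m, (z ∈ c.A ∨ z ∈ c.F ∨ z ∈ c.X) → Q.Adj v z → m ∈ c.B i → Q.Adj z m := by
      intro z m hz hvz hm
      rcases hz with h | h | h
      · exact c.AB i z h m hm
      · have hij : i ≠ c.j := fun he => c.FBj z h v (show v ∈ c.B c.j by rw [← he]; exact hv) hvz.symm
        exact c.FB i hij z h m hm
      · have hij : i = c.j := by_contra fun hne => c.XB i hne z h v hv hvz.symm
        exact c.XBj z h m (show m ∈ c.B c.j by rw [← hij]; exact hm)
    have pairC : ∀ z m, Q.Adj v z → Q.Adj v m → ¬ Q.Adj z m → z ≠ m →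
        z ∈ c.C i ∨ m ∈ c.C i := by
      intro z m hz hm hnzm hne
      rcases cls z hz with hK | hB | hC
      · rcases cls m hm with hK' | hB' | hC'
        · exact absurd (c.adjAFX hK hK' hne) hnzm
        · exact absurd (crossB z m hK hz hB') hnzm
        · exact Or.inr hC'
      · rcases cls m hm with hK' | hB' | hC'
        · exact absurd (crossB m z hK' hm hB) (fun hh => hnzm hh.symm)
        · exact absurd (c.cB i hB hB' hne) hnzm
        · exact Or.inr hC'
      · exact Or.inl hC
    rcases pairC n1 n2 h1 h2 n12 e12 with h | h
    · rcases pairC n2 n3 h2 h3 n23 e23 with h' | h'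
      · exact n12 (c.cC i h h' e12)
      · exact n13 (c.cC i h h' e13)
    · rcases pairC n1 n3 h1 h3 n13 e13 with h' | h'
      · exact n12 (c.cC i h' h e12)
      · exact n23 (c.cC i h h' e23)
  · exfalso
    have cls : ∀ z, Q.Adj v z → ((∃ k, z ∈ c.C k) ∨ z ∈ c.Y) ∨ z ∈ c.B i ∨ z ∈ c.F := by
      intro z hz
      rcases c.part z with h | ⟨k, h⟩ | ⟨k, h⟩ | h | h | h
      · exact absurd hz.symm (c.AC i z h v hv)
      · exact Or.inr (Or.inl (show z ∈ c.B i by rw [← c.bcEq h hv hz.symm]; exact h))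
      · exact Or.inl (Or.inl ⟨k, h⟩)
      · exact Or.inr (Or.inr h)
      · exact absurd hz.symm (c.XC i z h v hv)
      · exact Or.inl (Or.inr h)
    have crossF : ∀ z m, z ∈ c.F → Q.Adj v z → m ∈ c.B i → Q.Adj z m := by
      intro z m hz hvz hm
      have hij : i ≠ c.j := fun he => c.FCj z hz v (show v ∈ c.C c.j by rw [← he]; exact hv) hvz.symm
      exact c.FB i hij z hz m hm
    have pairCY : ∀ z m, Q.Adj v z → Q.Adj v m → ¬ Q.Adj z m → z ≠ m →
        ((∃ k, z ∈ c.C k) ∨ z ∈ c.Y) ∨ ((∃ k, m ∈ c.C k) ∨ m ∈ c.Y) := by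
      intro z m hz hm hnzm hne
      rcases cls z hz with hK | hB | hF
      · exact Or.inl hK
      · rcases cls m hm with hK' | hB' | hF'
        · exact Or.inr hK'
        · exact absurd (c.cB i hB hB' hne) hnzm
        · exact absurd (crossF m z hF' hm hB) (fun hh => hnzm hh.symm)
      · rcases cls m hm with hK' | hB' | hF'
        · exact Or.inr hK'
        · exact absurd (crossF z m hF hz hB') hnzm
        · exact absurd (c.cF hF hF' hne) hnzm
    rcases pairCY n1 n2 h1 h2 n12 e12 with h | h
    · rcases pairCY n2 n3 h2 h3 n23 e23 with h' | h'
      · exact n12 (c.adjCY h h' e12)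
      · exact n13 (c.adjCY h h' e13)
    · rcases pairCY n1 n3 h1 h3 n13 e13 with h' | h'
      · exact n12 (c.adjCY h' h e12)
      · exact n23 (c.adjCY h h' e23)
  · exact Or.inr h
  · exfalso
    have cls : ∀ z, Q.Adj v z → (z ∈ c.A ∨ z ∈ c.F ∨ z ∈ c.X) ∨ z ∈ c.B c.j := by
      intro z hz
      rcases c.part z with hh | ⟨k, hh⟩ | ⟨k, hh⟩ | hh | hh | hh
      · exact Or.inl (Or.inl hh)
      · exact Or.inr (show z ∈ c.B c.j by
          rw [← (by_contra fun hne => c.XB k hne v h z hh hz : k = c.j)]; exact hh)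
      · exact absurd hz (c.XC k v h z hh)
      · exact Or.inl (Or.inr (Or.inl hh))
      · exact Or.inl (Or.inr (Or.inr hh))
      · exact absurd hz (c.XYa v h z hh)
    rcases cls n1 h1 with c1 | c1 <;> rcases cls n2 h2 with c2 | c2 <;> rcases cls n3 h3 with c3 | c3
    · exact n12 (c.adjAFX c1 c2 e12)
    · exact n12 (c.adjAFX c1 c2 e12)
    · exact n13 (c.adjAFX c1 c3 e13)
    · exact n23 (c.cB c.j c2 c3 e23)
    · exact n23 (c.adjAFX c2 c3 e23)
    · exact n13 (c.cB c.j c1 c3 e13)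
    · exact n12 (c.cB c.j c1 c2 e12)
    · exact n12 (c.cB c.j c1 c2 e12)
  · exfalso
    have cls : ∀ z, Q.Adj v z → ((∃ k, z ∈ c.C k) ∨ z ∈ c.Y) ∨ z ∈ c.F := by
      intro z hz
      rcases c.part z with hh | ⟨k, hh⟩ | ⟨k, hh⟩ | hh | hh | hh
      · exact absurd hz (c.YA v h z hh)
      · exact absurd hz (c.YB k v h z hh)
      · exact Or.inl (Or.inl ⟨k, hh⟩)
      · exact Or.inr hh
      · exact absurd hz.symm (c.XYa z hh v h)
      · exact Or.inl (Or.inr hh)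
    rcases cls n1 h1 with c1 | c1 <;> rcases cls n2 h2 with c2 | c2 <;> rcases cls n3 h3 with c3 | c3
    · exact n12 (c.adjCY c1 c2 e12)
    · exact n12 (c.adjCY c1 c2 e12)
    · exact n13 (c.adjCY c1 c3 e13)
    · exact n23 (c.cF c2 c3 e23)
    · exact n23 (c.adjCY c2 c3 e23)
    · exact n13 (c.cF c1 c3 e13)
    · exact n12 (c.cF c1 c2 e12)
    · exact n12 (c.cF c1 c2 e12)

lemma noT0 : IndFree Q T0 := by
  constructor
  intro f
  have adjf : ∀ a b : Fin 9, T0.Adj a b → Q.Adj (f a) (f b) := fun a b h => f.map_adj_iff.mpr h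
  have nadjf : ∀ a b : Fin 9, ¬ T0.Adj a b → ¬ Q.Adj (f a) (f b) :=
    fun a b h hh => h (f.map_adj_iff.mp hh)
  have nef : ∀ a b : Fin 9, a ≠ b → f a ≠ f b := fun a b h hh => h (f.injective hh)
  have a02 := adjf 0 2 (by simp only [T0, SimpleGraph.fromRel_adj]; decide)
  have a04 := adjf 0 4 (by simp only [T0, SimpleGraph.fromRel_adj]; decide)
  have a05 := adjf 0 5 (by simp only [T0, SimpleGraph.fromRel_adj]; decide)
  have n24 := nadjf 2 4 (by simp only [T0, SimpleGraph.fromRel_adj]; decide)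
  have n25 := nadjf 2 5 (by simp only [T0, SimpleGraph.fromRel_adj]; decide)
  have n45 := nadjf 4 5 (by simp only [T0, SimpleGraph.fromRel_adj]; decide)
  have n03 := nadjf 0 3 (by simp only [T0, SimpleGraph.fromRel_adj]; decide)
  have n07 := nadjf 0 7 (by simp only [T0, SimpleGraph.fromRel_adj]; decide)
  have n37 := nadjf 3 7 (by simp only [T0, SimpleGraph.fromRel_adj]; decide)
  have h0 := c.indep3 a02 a04 a05 n24 n25 n45 (nef 2 4 (by decide)) (nef 2 5 (by decide))
    (nef 4 5 (by decide))
  exact n37 (c.elimPair h0 n03 n07 (nef 3 0 (by decide)) (nef 7 0 (by decide)) (nef 3 7 (by decide)))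

lemma hasPentagon : Nonempty (pentagon t ↪g Q) := by
  obtain ⟨a, ha⟩ := c.Ane
  choose b hb using c.tp
  choose cc hcc using c.Cne
  let m : Unit ⊕ Fin t ⊕ Fin t → W := fun u =>
    match u with
    | Sum.inl _ => a
    | Sum.inr (Sum.inl i) => b i
    | Sum.inr (Sum.inr i) => cc i
  have inj : Function.Injective m := by
    rintro (u | ix | ix) (w | iy | iy) h <;> simp only [m] at h
    · rfl
    · exact absurd h (set_dne (c.dAB iy) ha (hb iy).1)
    · exact absurd h (set_dne (c.dAC iy) ha (hcc iy))
    · exact absurd h (Ne.symm (set_dne (c.dAB ix) ha (hb ix).1))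
    · rw [show ix = iy from
        by_contra fun hne => set_dne (c.dBB ix iy hne) (hb ix).1 (hb iy).1 h]
    · exact absurd h (set_dne (c.dBC ix iy) (hb ix).1 (hcc iy))
    · exact absurd h (Ne.symm (set_dne (c.dAC ix) ha (hcc ix)))
    · exact absurd h (Ne.symm (set_dne (c.dBC iy ix) (hb iy).1 (hcc ix)))
    · rw [show ix = iy from
        by_contra fun hne => set_dne (c.dCC ix iy hne) (hcc ix) (hcc iy) h]
  refine ⟨⟨⟨m, inj⟩, ?_⟩⟩
  rintro (u | ix | ix) (w | iy | iy) <;> simp only [m, Function.Embedding.coeFn_mk]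
  · exact iff_of_false Q.irrefl (by simp [pentagon, SimpleGraph.fromRel_adj])
  · exact iff_of_true (c.AB iy a ha (b iy) (hb iy).1)
      (by simp [pentagon, SimpleGraph.fromRel_adj])
  · exact iff_of_false (c.AC iy a ha (cc iy) (hcc iy))
      (by simp [pentagon, SimpleGraph.fromRel_adj])
  · exact iff_of_true (c.AB ix a ha (b ix) (hb ix).1).symm
      (by simp [pentagon, SimpleGraph.fromRel_adj])
  · refine iff_of_false ?_ (by simp [pentagon, SimpleGraph.fromRel_adj])
    by_cases hxy : ix = iy
    · subst hxy; exact Q.irrefl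
    · exact c.BB ix iy hxy _ (hb ix).1 _ (hb iy).1
  · rw [show (pentagon t).Adj (Sum.inr (Sum.inl ix)) (Sum.inr (Sum.inr iy)) ↔ ix = iy from
      by simp [pentagon, SimpleGraph.fromRel_adj]]
    constructor
    · exact fun h => c.bcEq (hb ix).1 (hcc iy) h
    · rintro rfl
      exact (SimpleGraph.mem_neighborSet _ _ _).mp ((hb ix).2 (hcc ix))
  · exact iff_of_false (fun h => c.AC ix a ha (cc ix) (hcc ix) h.symm)
      (by simp [pentagon, SimpleGraph.fromRel_adj])
  · rw [show (pentagon t).Adj (Sum.inr (Sum.inr ix)) (Sum.inr (Sum.inl iy)) ↔ iy = ix from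
      by simp [pentagon, SimpleGraph.fromRel_adj]]
    constructor
    · exact fun h => c.bcEq (hb iy).1 (hcc ix) h.symm
    · rintro rfl
      exact ((SimpleGraph.mem_neighborSet _ _ _).mp ((hb iy).2 (hcc iy))).symm
  · rw [show (pentagon t).Adj (Sum.inr (Sum.inr ix)) (Sum.inr (Sum.inr iy)) ↔ ix ≠ iy from
      by simp [pentagon, SimpleGraph.fromRel_adj]]
    constructor
    · exact fun h he => Q.irrefl (by rw [he] at h; exact h)
    · exact fun hne => c.CCm ix iy hne _ (hcc ix) _ (hcc iy)

lemma exists_ne (i : Fin t) : ∃ k : Fin t, i ≠ k := by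
  have h3 := c.ht
  by_cases h : i.val = 0
  · refine ⟨⟨1, by omega⟩, fun he => ?_⟩
    rw [he] at h
    simp at h
  · exact ⟨⟨0, by omega⟩, fun he => h (by rw [he])⟩

lemma anticonn : Qᶜ.Connected := by
  obtain ⟨a0, ha0⟩ := c.Ane
  have ht3 := c.ht
  let i0 : Fin t := ⟨0, by omega⟩
  have key : ∀ v, Qᶜ.Reachable v a0 := by
    intro v
    have step : ∀ i : Fin t, ∀ cw ∈ c.C i, Qᶜ.Adj cw a0 := by
      intro i cw hci
      rw [SimpleGraph.compl_adj]
      exact ⟨(set_dne (c.dAC i) ha0 hci).symm, fun h => c.AC i a0 ha0 cw hci h.symm⟩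
    rcases c.part v with h | ⟨i, h⟩ | ⟨i, h⟩ | h | h | h
    · by_cases hv : v = a0
      · subst hv
        exact SimpleGraph.Reachable.refl v
      · obtain ⟨cw, hcw⟩ := c.Cne i0
        have h1 : Qᶜ.Adj v cw := (SimpleGraph.compl_adj _ _ _).mpr
          ⟨set_dne (c.dAC i0) h hcw, fun hh => c.AC i0 v h cw hcw hh⟩
        exact h1.reachable.trans (step i0 cw hcw).reachable
    · obtain ⟨k, hik⟩ := c.exists_ne i
      obtain ⟨cw, hcw⟩ := c.Cne k
      have h1 : Qᶜ.Adj v cw := (SimpleGraph.compl_adj _ _ _).mpr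
        ⟨set_dne (c.dBC i k) h hcw, fun hh => c.BCa i k hik v h cw hcw hh⟩
      exact h1.reachable.trans (step k cw hcw).reachable
    · exact (step i v h).reachable
    · obtain ⟨cw, hcw⟩ := c.Cne c.j
      have h1 : Qᶜ.Adj v cw := (SimpleGraph.compl_adj _ _ _).mpr
        ⟨(set_dne (c.dCF c.j) hcw h).symm, fun hh => c.FCj v h cw hcw hh⟩
      exact h1.reachable.trans (step c.j cw hcw).reachable
    · obtain ⟨cw, hcw⟩ := c.Cne i0
      have h1 : Qᶜ.Adj v cw := (SimpleGraph.compl_adj _ _ _).mpr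
        ⟨(set_dne (c.dCX i0) hcw h).symm, fun hh => c.XC i0 v h cw hcw hh⟩
      exact h1.reachable.trans (step i0 cw hcw).reachable
    · have h1 : Qᶜ.Adj v a0 := (SimpleGraph.compl_adj _ _ _).mpr
        ⟨(set_dne c.dAY ha0 h).symm, fun hh => c.YA v h a0 ha0 hh⟩
      exact h1.reachable
  rw [SimpleGraph.connected_iff]
  exact ⟨fun u w => (key u).trans (key w).symm, ⟨a0⟩⟩

lemma noSimplicial : ∀ v : W, ¬ IsSimplicial Q v := by
  intro v hS
  have pair : ∀ z z', Q.Adj v z → Q.Adj v z' → z ≠ z' → Q.Adj z z' := fun z z' h1 h2 hne =>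
    hS ((SimpleGraph.mem_neighborSet _ _ _).mpr h1) ((SimpleGraph.mem_neighborSet _ _ _).mpr h2) hne
  have ht3 := c.ht
  let i0 : Fin t := ⟨0, by omega⟩
  rcases c.part v with h | ⟨i, h⟩ | ⟨i, h⟩ | h | h | h
  · obtain ⟨k, hk⟩ := c.exists_ne i0
    obtain ⟨b1, hb1⟩ := c.Bne i0
    obtain ⟨b2, hb2⟩ := c.Bne k
    exact c.BB i0 k hk b1 hb1 b2 hb2
      (pair b1 b2 (c.AB i0 v h b1 hb1) (c.AB k v h b2 hb2)
        (set_dne (c.dBB i0 k hk) hb1 hb2))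
  · obtain ⟨a, haa⟩ := c.Ane
    obtain ⟨cw, hcw⟩ := c.BCne i v h
    exact c.AC i a haa cw hcw.2
      (pair a cw (c.AB i a haa v h).symm ((SimpleGraph.mem_neighborSet _ _ _).mp hcw.1)
        (set_dne (c.dAC i) haa hcw.2))
  · obtain ⟨bb, hbb, hbn⟩ := c.tp i
    obtain ⟨k, hik⟩ := c.exists_ne i
    obtain ⟨cw, hcw⟩ := c.Cne k
    exact c.BCa i k hik bb hbb cw hcw
      (pair bb cw ((SimpleGraph.mem_neighborSet _ _ _).mp (hbn h)).symm
        (c.CCm i k hik v h cw hcw) (set_dne (c.dBC i k) hbb hcw))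
  · obtain ⟨a, haa⟩ := c.Ane
    obtain ⟨k0, hk0⟩ := c.exists_ne c.j
    have hk : k0 ≠ c.j := Ne.symm hk0
    set k := k0 with hkdef
    obtain ⟨cw, hcw⟩ := c.Cne k
    exact c.AC k a haa cw hcw
      (pair a cw (c.FA v h a haa) (c.FC k hk v h cw hcw) (set_dne (c.dAC k) haa hcw))
  · obtain ⟨ff, hff⟩ := c.Fne
    obtain ⟨bb, hbb⟩ := c.Bne c.j
    exact c.FBj ff hff bb hbb
      (pair ff bb (c.FXc ff hff v h).symm (c.XBj v h bb hbb)
        (Ne.symm (set_dne (c.dBF c.j) hbb hff)))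
  · obtain ⟨ff, hff⟩ := c.Fne
    obtain ⟨cw, hcw⟩ := c.Cne c.j
    exact c.FCj ff hff cw hcw
      (pair ff cw (c.FYc ff hff v h).symm (c.YC c.j v h cw hcw)
        (Ne.symm (set_dne (c.dCF c.j) hcw hff)))

lemma noUniversal : ∀ v : W, ¬ IsUniversal Q v := by
  intro v hU
  have ht3 := c.ht
  let i0 : Fin t := ⟨0, by omega⟩
  rcases c.part v with h | ⟨i, h⟩ | ⟨i, h⟩ | h | h | h
  · obtain ⟨cw, hcw⟩ := c.Cne i0
    exact c.AC i0 v h cw hcw (hU cw (set_dne (c.dAC i0) h hcw).symm)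
  · obtain ⟨k, hik⟩ := c.exists_ne i
    obtain ⟨cw, hcw⟩ := c.Cne k
    exact c.BCa i k hik v h cw hcw (hU cw (set_dne (c.dBC i k) h hcw).symm)
  · obtain ⟨a, haa⟩ := c.Ane
    exact c.AC i a haa v h (hU a (set_dne (c.dAC i) haa h)).symm
  · obtain ⟨bb, hbb⟩ := c.Bne c.j
    exact c.FBj v h bb hbb (hU bb (set_dne (c.dBF c.j) hbb h))
  · obtain ⟨cw, hcw⟩ := c.Cne i0
    exact c.XC i0 v h cw hcw (hU cw (set_dne (c.dCX i0) hcw h))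
  · obtain ⟨a, haa⟩ := c.Ane
    exact c.YA v h a haa (hU a (set_dne c.dAY haa h))

end MCtx

theorem statement_9 {W : Type} [Fintype W] (t : ℕ) (ht : 3 ≤ t) (Q : SimpleGraph W)
    (hQ : IsTMansion t Q) :
    (IndFree Q twoP3 ∧ IndFree Q (cycleG 4) ∧ IndFree Q (cycleG 6) ∧
      IndFree Q (cycleG 7) ∧ IndFree Q T0) ∧
    Nonempty (pentagon t ↪g Q) ∧
    Qᶜ.Connected ∧ (∀ v : W, ¬ IsSimplicial Q v) ∧ (∀ v : W, ¬ IsUniversal Q v) := by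
  obtain ⟨A, B, C, F, X, Y, hm⟩ := hQ
  obtain ⟨⟨dABv, dACv, dBBv, dCCv, dBCv, cA, cB, cC, Ane, Bne, Cne, hAB, hAC, hBB, hCC,
    hBC, hnest, hBCne, htop⟩,
    dAF, dAX, dAY, dBF, dBX, dBY, dCF, dCX, dCY, dFX, dFY, dXY, hcov, cF, cX, cY, Fne,
    ⟨jst, hFA, hFB, hFC, hFBj, hFCj, hBjCj, hXA, hXBj, hXB, hXC⟩,
    hFX, hFY, hXY, hYC, hYA, hYB⟩ := hm
  have part : ∀ v, v ∈ A ∨ (∃ i, v ∈ B i) ∨ (∃ i, v ∈ C i) ∨ v ∈ F ∨ v ∈ X ∨ v ∈ Y := by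
    intro v
    have hv := Set.eq_univ_iff_forall.mp hcov v
    rcases hv with (((((h | h) | h) | h) | h) | h)
    · exact Or.inl h
    · exact Or.inr (Or.inl (Set.mem_iUnion.mp h))
    · exact Or.inr (Or.inr (Or.inl (Set.mem_iUnion.mp h)))
    · exact Or.inr (Or.inr (Or.inr (Or.inl h)))
    · exact Or.inr (Or.inr (Or.inr (Or.inr (Or.inl h))))
    · exact Or.inr (Or.inr (Or.inr (Or.inr (Or.inr h))))
  let c : MCtx Q t := MCtx.mk ht A F X Y B C jst part cA cB cC cF cX cY hAB hAC hBB hCC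
    hBC hnest hBCne htop Ane Bne Cne Fne hFA hFB hFC hFBj hFCj hBjCj hXA hXBj hXB hXC
    hFX hFY hXY hYC hYA hYB dABv dACv dAY dBBv dCCv dBCv dBF dCF dCX
  exact ⟨⟨c.no2P3, c.noC4, c.noC6, c.noC7, c.noT0⟩, c.hasPentagon, c.anticonn,
    c.noSimplicial, c.noUniversal⟩

end Paper
end

section
/- Every 5-crown is (2P_3, C_4, C_6, C_7, 3-pentagon)-free. Moreover, every 5-crown is anticonnected and contains no universal and no simplicial vertices. -/
namespace Paper

open SimpleGraph

variable {V : Type} {W : Type}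

section Aux

/-! ### Decidability instances for the small graphs -/

instance (n : ℕ) : DecidableRel (cycleG n).Adj := fun u v =>
  decidable_of_iff (u ≠ v ∧ (v = u + 1 ∨ u = v + 1)) (Iff.rfl : _ ↔ (cycleG n).Adj u v)

/-- Boolean adjacency for the 3-pentagon. -/
def pentB : Unit ⊕ Fin 3 ⊕ Fin 3 → Unit ⊕ Fin 3 ⊕ Fin 3 → Bool
  | Sum.inl _, Sum.inr (Sum.inl _) => true
  | Sum.inr (Sum.inl _), Sum.inl _ => true
  | Sum.inr (Sum.inl i), Sum.inr (Sum.inr j) => i = j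
  | Sum.inr (Sum.inr j), Sum.inr (Sum.inl i) => i = j
  | Sum.inr (Sum.inr i), Sum.inr (Sum.inr j) => i != j
  | _, _ => false

lemma pentagon_adj (u v : Unit ⊕ Fin 3 ⊕ Fin 3) : pentB u v = true ↔ (pentagon 3).Adj u v := by
  rcases u with _ | u | u <;> rcases v with _ | v | v <;>
    simp [pentagon, pentB, SimpleGraph.fromRel_adj]

instance : DecidableRel (pentagon 3).Adj := fun u v =>
  decidable_of_iff _ (pentagon_adj u v)

/-- Boolean adjacency for `2P₃`. -/
def twoB : Fin 3 ⊕ Fin 3 → Fin 3 ⊕ Fin 3 → Bool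
  | Sum.inl a, Sum.inl b => a.val + 1 = b.val || b.val + 1 = a.val
  | Sum.inr a, Sum.inr b => a.val + 1 = b.val || b.val + 1 = a.val
  | _, _ => false

lemma twoP3_adj (u v : Fin 3 ⊕ Fin 3) : twoB u v = true ↔ twoP3.Adj u v := by
  rcases u with u | u <;> rcases v with v | v <;>
    simp [twoP3, twoB, SimpleGraph.fromRel_adj, pathGraph_adj, Fin.ext_iff] <;> omega

instance : DecidableRel twoP3.Adj := fun u v => decidable_of_iff _ (twoP3_adj u v)

/-! ### Basic lemmas about ring partitions -/

variable {k : ℕ} {Q : SimpleGraph W} {X : ZMod k → Set W}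

lemma ring_exists_mem (h : IsRingPartition Q X) (v : W) : ∃ i, v ∈ X i :=
  Set.iUnion_eq_univ_iff.mp h.2.1 v

lemma ring_mem_unique (h : IsRingPartition Q X) {v : W} {i j : ZMod k}
    (hi : v ∈ X i) (hj : v ∈ X j) : i = j := by
  by_contra hne
  exact Set.disjoint_left.mp (h.1 i j hne) hi hj

lemma ring_adj_of_mem (h : IsRingPartition Q X) {v w : W} {i : ZMod k}
    (hv : v ∈ X i) (hw : w ∈ X i) (hne : v ≠ w) : Q.Adj v w := by
  rcases h.2.2.2.1 i v hv hw with h' | h'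
  · exact absurd h'.symm hne
  · exact h'

lemma ring_nested (h : IsRingPartition Q X) {v v' w w' : W} {i : ZMod k}
    (hv : v ∈ X i) (hv' : v' ∈ X i) (hw : Q.Adj w v) (hw' : Q.Adj w' v') :
    w = v' ∨ Q.Adj w v' ∨ w' = v ∨ Q.Adj w' v := by
  rcases h.2.2.2.2.1 i v hv v' hv' with hsub | hsub
  · have hmem : w ∈ insert v' (Q.neighborSet v') := hsub (Set.mem_insert_of_mem _ hw.symm)
    rcases hmem with h' | h'
    · exact Or.inl h'
    · exact Or.inr (Or.inl (Q.adj_symm h'))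
  · have hmem : w' ∈ insert v (Q.neighborSet v) := hsub (Set.mem_insert_of_mem _ hw'.symm)
    rcases hmem with h' | h'
    · exact Or.inr (Or.inr (Or.inl h'))
    · exact Or.inr (Or.inr (Or.inr (Q.adj_symm h')))

lemma ring_adj_parts (h : IsRingPartition Q X) {v w : W} {i j : ZMod k}
    (hv : v ∈ X i) (hw : w ∈ X j) (ha : Q.Adj v w) :
    j = i - 1 ∨ j = i ∨ j = i + 1 := by
  have hmem : w ∈ X (i-1) ∪ X i ∪ X (i+1) :=
    h.2.2.2.2.2.1 i v hv (Set.mem_insert_of_mem _ ha)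
  rcases hmem with (h' | h') | h'
  · exact Or.inl (ring_mem_unique h hw h')
  · exact Or.inr (Or.inl (ring_mem_unique h hw h'))
  · exact Or.inr (Or.inr (ring_mem_unique h hw h'))

/-! ### Arithmetic facts in `ZMod 5` -/

/-- Forbidden part pairs across which a 5-crown with parameter `s` is complete. -/
def okP (s a b : ZMod 5) : Bool :=
  (a = s+1 && b = s+2) || (b = s+1 && a = s+2) || (a = s-1 && b = s-2) || (b = s-1 && a = s-2)

set_option synthInstance.maxSize 1000 in
lemma D1 : ∀ s a b c d : ZMod 5, a ≠ b → a ≠ c → a ≠ d → b ≠ c → b ≠ d → c ≠ d →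
    okP s a b = false → okP s a c = false → okP s a d = false →
    okP s b c = false → okP s b d = false → okP s c d = false → False := by decide

set_option synthInstance.maxSize 1000 in
lemma D2 : ∀ a b c d : ZMod 5, a ≠ b → a ≠ c → a ≠ d → b ≠ c → b ≠ d → c ≠ d →
    (b = a-1 ∨ b = a ∨ b = a+1) → (c = b-1 ∨ c = b ∨ c = b+1) →
    (d = c-1 ∨ d = c ∨ d = c+1) → (a = d-1 ∨ a = d ∨ a = d+1) → False := by decide

lemma Z1 : ∀ i : ZMod 5, ¬(i + 2 = i - 1 ∨ i + 2 = i ∨ i + 2 = i + 1) := by decide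
lemma Z2 : ∀ i : ZMod 5, ¬(i - 1 = i + 1 - 1 ∨ i - 1 = i + 1 ∨ i - 1 = i + 1 + 1) := by decide
lemma Z3 : ∀ i : ZMod 5, i ≠ i + 2 := by decide
lemma Z4 : ∀ i : ZMod 5, i ≠ i + 1 := by decide
lemma Z5 : ∀ i : ZMod 5, i + 1 ≠ i - 1 := by decide
lemma Z6 : ∀ i : ZMod 5, i + 2 + 2 + 2 = i + 1 := by decide
lemma Z7 : ∀ i : ZMod 5, i + 2 + 2 + 2 + 2 + 2 = i := by decide
lemma Z8 : ∀ i : ZMod 5, i ≠ i - 1 := by decide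

/-! ### The uniform freeness lemma -/

lemma crown_free {U : Type} [Fintype U] {X : ZMod 5 → Set W}
    (h : IsRingPartition Q X) (H : SimpleGraph U)
    (hcard : 5 < Fintype.card U)
    (hwit : ∀ u v : U, H.Adj u v → ∃ w w' : U, H.Adj w u ∧ ¬ H.Adj w v ∧ w ≠ v ∧
      H.Adj w' v ∧ ¬ H.Adj w' u ∧ w' ≠ u) :
    IndFree Q H := by
  classical
  refine ⟨fun e => ?_⟩
  let f : U → ZMod 5 := fun u => (ring_exists_mem h (e u)).choose
  have hf : ∀ u, e u ∈ X (f u) := fun u => (ring_exists_mem h (e u)).choose_spec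
  obtain ⟨u, v, huv, hfe⟩ := Fintype.exists_ne_map_eq_of_card_lt f (by rwa [ZMod.card])
  have hne : e u ≠ e v := fun hh => huv (e.injective hh)
  have hv' : e v ∈ X (f u) := by rw [hfe]; exact hf v
  have hadjH : H.Adj u v := e.map_adj_iff.mp (ring_adj_of_mem h (hf u) hv' hne)
  obtain ⟨w, w', h1, h2, h3, h4, h5, h6⟩ := hwit u v hadjH
  rcases ring_nested h (hf u) hv' (e.map_adj_iff.mpr h1) (e.map_adj_iff.mpr h4) with
    hc | hc | hc | hc
  · exact h3 (e.injective hc)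
  · exact h2 (e.map_adj_iff.mp hc)
  · exact h6 (e.injective hc)
  · exact h5 (e.map_adj_iff.mp hc)

end Aux

theorem statement_10 {W : Type} [Fintype W] (Q : SimpleGraph W)
    (hQ : IsFiveCrown Q) :
    (IndFree Q twoP3 ∧ IndFree Q (cycleG 4) ∧ IndFree Q (cycleG 6) ∧
      IndFree Q (cycleG 7) ∧ IndFree Q (pentagon 3)) ∧
    Qᶜ.Connected ∧ (∀ v : W, ¬ IsUniversal Q v) ∧ (∀ v : W, ¬ IsSimplicial Q v) := by
  classical
  obtain ⟨X, hX, s, hc1, hc2⟩ := hQ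
  have hok : ∀ {x y : W} {i j : ZMod 5}, x ∈ X i → y ∈ X j → ¬ Q.Adj x y →
      okP s i j = false := by
    intro x y i j hx hy hna
    rcases Bool.eq_false_or_eq_true (okP s i j) with hb | hb
    swap
    · exact hb
    · exfalso
      simp only [okP, Bool.or_eq_true, Bool.and_eq_true, decide_eq_true_eq] at hb
      rcases hb with ((⟨h1, h2⟩ | ⟨h1, h2⟩) | ⟨h1, h2⟩) | ⟨h1, h2⟩
      · exact hna (hc2 x (h1 ▸ hx) y (h2 ▸ hy))
      · exact hna ((hc2 y (h1 ▸ hy) x (h2 ▸ hx)).symm)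
      · exact hna (hc1 x (h1 ▸ hx) y (h2 ▸ hy))
      · exact hna ((hc1 y (h1 ▸ hy) x (h2 ▸ hx)).symm)
  have hparts_ne : ∀ {x y : W} {i j : ZMod 5}, x ∈ X i → y ∈ X j → x ≠ y →
      ¬ Q.Adj x y → i ≠ j := by
    intro x y i j hx hy hxy hna hij
    exact hna (ring_adj_of_mem hX hx (by rw [← hij] at hy; exact hy) hxy)
  refine ⟨⟨?_, ?_, ?_, ?_, ?_⟩, ?_, ?_, ?_⟩
  · -- 2P3-free
    refine ⟨fun e => ?_⟩
    obtain ⟨i1, m1⟩ := ring_exists_mem hX (e (Sum.inl 0))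
    obtain ⟨i2, m2⟩ := ring_exists_mem hX (e (Sum.inl 2))
    obtain ⟨i3, m3⟩ := ring_exists_mem hX (e (Sum.inr 0))
    obtain ⟨i4, m4⟩ := ring_exists_mem hX (e (Sum.inr 2))
    have key : ∀ (a b : Fin 3 ⊕ Fin 3) {i j : ZMod 5}, e a ∈ X i → e b ∈ X j →
        a ≠ b → ¬ twoP3.Adj a b → i ≠ j ∧ okP s i j = false := by
      intro a b i j ha hb hab hnadj
      have hne : e a ≠ e b := fun hh => hab (e.injective hh)
      have hnq : ¬ Q.Adj (e a) (e b) := fun h => hnadj (e.map_adj_iff.mp h)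
      exact ⟨hparts_ne ha hb hne hnq, hok ha hb hnq⟩
    obtain ⟨d12, o12⟩ := key _ _ m1 m2 (by decide) (by decide)
    obtain ⟨d13, o13⟩ := key _ _ m1 m3 (by decide) (by decide)
    obtain ⟨d14, o14⟩ := key _ _ m1 m4 (by decide) (by decide)
    obtain ⟨d23, o23⟩ := key _ _ m2 m3 (by decide) (by decide)
    obtain ⟨d24, o24⟩ := key _ _ m2 m4 (by decide) (by decide)
    obtain ⟨d34, o34⟩ := key _ _ m3 m4 (by decide) (by decide)
    exact D1 s i1 i2 i3 i4 d12 d13 d14 d23 d24 d34 o12 o13 o14 o23 o24 o34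
  · -- C4-free
    refine ⟨fun e => ?_⟩
    obtain ⟨i0, m0⟩ := ring_exists_mem hX (e 0)
    obtain ⟨i1, m1⟩ := ring_exists_mem hX (e 1)
    obtain ⟨i2, m2⟩ := ring_exists_mem hX (e 2)
    obtain ⟨i3, m3⟩ := ring_exists_mem hX (e 3)
    have dcons : ∀ (p q r t : ZMod 4) {ip iq : ZMod 5},
        e p ∈ X ip → e q ∈ X iq →
        (cycleG 4).Adj r p → (cycleG 4).Adj t q →
        ¬ (cycleG 4).Adj r q → r ≠ q → ¬ (cycleG 4).Adj t p → t ≠ p → ip ≠ iq := by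
      intro p q r t ip iq hp hq hrp htq h1 h2 h3 h4 hh
      have hq' : e q ∈ X ip := by rw [hh]; exact hq
      rcases ring_nested hX hp hq' (e.map_adj_iff.mpr hrp) (e.map_adj_iff.mpr htq) with
        hc | hc | hc | hc
      · exact h2 (e.injective hc)
      · exact h1 (e.map_adj_iff.mp hc)
      · exact h4 (e.injective hc)
      · exact h3 (e.map_adj_iff.mp hc)
    have d01 : i0 ≠ i1 := dcons 0 1 3 2 m0 m1 (by decide) (by decide) (by decide)
      (by decide) (by decide) (by decide)
    have d12 : i1 ≠ i2 := dcons 1 2 0 3 m1 m2 (by decide) (by decide) (by decide)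
      (by decide) (by decide) (by decide)
    have d23 : i2 ≠ i3 := dcons 2 3 1 0 m2 m3 (by decide) (by decide) (by decide)
      (by decide) (by decide) (by decide)
    have d03 : i0 ≠ i3 := dcons 0 3 1 2 m0 m3 (by decide) (by decide) (by decide)
      (by decide) (by decide) (by decide)
    have d02 : i0 ≠ i2 :=
      hparts_ne m0 m2 (fun h => (by decide : (0 : ZMod 4) ≠ 2) (e.injective h))
        (fun h => (by decide : ¬ (cycleG 4).Adj 0 2) (e.map_adj_iff.mp h))
    have d13 : i1 ≠ i3 :=
      hparts_ne m1 m3 (fun h => (by decide : (1 : ZMod 4) ≠ 3) (e.injective h))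
        (fun h => (by decide : ¬ (cycleG 4).Adj 1 3) (e.map_adj_iff.mp h))
    have h01 := ring_adj_parts hX m0 m1 (e.map_adj_iff.mpr (by decide : (cycleG 4).Adj 0 1))
    have h12 := ring_adj_parts hX m1 m2 (e.map_adj_iff.mpr (by decide : (cycleG 4).Adj 1 2))
    have h23 := ring_adj_parts hX m2 m3 (e.map_adj_iff.mpr (by decide : (cycleG 4).Adj 2 3))
    have h30 := ring_adj_parts hX m3 m0 (e.map_adj_iff.mpr (by decide : (cycleG 4).Adj 3 0))
    exact D2 i0 i1 i2 i3 d01 d02 d03 d12 d13 d23 h01 h12 h23 h30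
  · -- C6-free
    refine crown_free hX (cycleG 6) (by rw [ZMod.card]; norm_num) (by decide)
  · -- C7-free
    refine crown_free hX (cycleG 7) (by rw [ZMod.card]; norm_num) (by decide)
  · -- 3-pentagon-free
    refine crown_free hX (pentagon 3)
      (by rw [Fintype.card_sum, Fintype.card_sum, Fintype.card_unit, Fintype.card_fin]
          norm_num) (by decide)
  · -- complement connected
    have hnon : ∀ i, (X i).Nonempty := hX.2.2.1
    let c : ZMod 5 → W := fun i => (hnon i).choose
    have hcmem : ∀ i, c i ∈ X i := fun i => (hnon i).choose_spec
    have hstep : ∀ (v : W) (i : ZMod 5), v ∈ X i → Qᶜ.Adj v (c (i+2)) := by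
      intro v i hv
      rw [compl_adj]
      constructor
      · intro h
        rw [h] at hv
        exact Z3 i (ring_mem_unique hX hv (hcmem (i+2)))
      · intro h
        exact Z1 i (ring_adj_parts hX hv (hcmem (i+2)) h)
    have hreach : ∀ (v : W) (i : ZMod 5), v ∈ X i → Qᶜ.Reachable v (c i) := by
      intro v i hv
      have r := ((hstep v i hv).reachable).trans
        (((hstep _ _ (hcmem (i+2))).reachable).trans
        (((hstep _ _ (hcmem (i+2+2))).reachable).trans
        (((hstep _ _ (hcmem (i+2+2+2))).reachable).trans
        ((hstep _ _ (hcmem (i+2+2+2+2))).reachable))))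
      rwa [Z7 i] at r
    have hone : ∀ i : ZMod 5, Qᶜ.Reachable (c i) (c (i+1)) := by
      intro i
      have r := ((hstep _ _ (hcmem i)).reachable).trans
        (((hstep _ _ (hcmem (i+2))).reachable).trans
        ((hstep _ _ (hcmem (i+2+2))).reachable))
      rwa [Z6 i] at r
    have hiter : ∀ (n : ℕ) (i : ZMod 5), Qᶜ.Reachable (c i) (c (i + n)) := by
      intro n
      induction n with
      | zero => intro i; simpa using Reachable.refl (c i)
      | succ m ih =>
        intro i
        have r := (ih i).trans (hone (i + m))
        have hcast : (i + ((m+1 : ℕ) : ZMod 5)) = i + m + 1 := by push_cast; ring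
        rw [hcast]
        exact r
    have hcc : ∀ i j : ZMod 5, Qᶜ.Reachable (c i) (c j) := by
      intro i j
      have r := hiter ((j - i).val) i
      have hcast : (i + (((j - i).val : ℕ) : ZMod 5)) = j := by
        rw [ZMod.natCast_val, ZMod.cast_id]
        abel
      rwa [hcast] at r
    rw [connected_iff]
    refine ⟨?_, ⟨c 0⟩⟩
    intro u v
    obtain ⟨i, hi⟩ := ring_exists_mem hX u
    obtain ⟨j, hj⟩ := ring_exists_mem hX v
    exact ((hreach u i hi).trans (hcc i j)).trans (hreach v j hj).symm
  · -- no universal vertex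
    intro v hv
    obtain ⟨i, hi⟩ := ring_exists_mem hX v
    obtain ⟨w, hw⟩ := hX.2.2.1 (i+2)
    have hne : w ≠ v := by
      intro h
      rw [h] at hw
      exact Z3 i (ring_mem_unique hX hi hw)
    exact Z1 i (ring_adj_parts hX hi hw (hv w hne))
  · -- no simplicial vertex
    intro v hv
    obtain ⟨i, hi⟩ := ring_exists_mem hX v
    obtain ⟨u, hu, hudom⟩ := hX.2.2.2.2.2.2 (i+1)
    obtain ⟨u', hu', hudom'⟩ := hX.2.2.2.2.2.2 (i-1)
    have hvmem : v ∈ insert u (Q.neighborSet u) :=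
      hudom (Set.mem_union_left _ (Set.mem_union_left _ (by rw [add_sub_cancel_right]; exact hi)))
    have hvmem' : v ∈ insert u' (Q.neighborSet u') :=
      hudom' (Set.mem_union_right _ (by rw [sub_add_cancel]; exact hi))
    have hneu : v ≠ u := by
      intro h
      have : v ∈ X (i+1) := by rw [h]; exact hu
      exact Z4 i (ring_mem_unique hX hi this)
    have hneu' : v ≠ u' := by
      intro h
      have : v ∈ X (i-1) := by rw [h]; exact hu'
      exact Z8 i (ring_mem_unique hX hi this)
    have hmu : u ∈ Q.neighborSet v := by
      rcases hvmem with h | h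
      · exact absurd h hneu
      · exact (SimpleGraph.mem_neighborSet _ _ _).mpr ((Q.adj_symm h))
    have hmu' : u' ∈ Q.neighborSet v := by
      rcases hvmem' with h | h
      · exact absurd h hneu'
      · exact (SimpleGraph.mem_neighborSet _ _ _).mpr ((Q.adj_symm h))
    have huu' : u ≠ u' := by
      intro h
      have : u ∈ X (i-1) := by rw [h]; exact hu'
      exact Z5 i (ring_mem_unique hX hu this)
    exact Z2 i (ring_adj_parts hX hu hu' (hv hmu hmu' huu'))


end Paper
end
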